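/- arXiv:2309.04020 — 5 statements merged into one kernel-verified Lean document; each statement's English description precedes it below -/
import Mathlib

section
/- Fix a constraint C and an implementable local compromiser assignment α for C. If α is consistent (both forward consistent and backward consistent), then the local priority mechanism LP_α is group strategy-proof. -/
/- Common framework: constrained allocation, local priority mechanisms
   (Root & Ahn, "Local Priority Mechanisms"). Agents `N`, objects `O`.
   A strict preference is encoded as a `LinearOrder` on `O`, where
   `pi.lt b a` means `a` is strictly preferred to `b`. -/

open Classical

noncomputable section

variable {N O : Type}

/-- `a` is strictly preferred to `b` under `pi`. -/
def sPref (pi : LinearOrder O) (a b : O) : Prop := pi.lt b a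

/-- `a` is weakly preferred to `b` under `pi`. -/
def wPref (pi : LinearOrder O) (a b : O) : Prop := a = b ∨ pi.lt b a

/-- The favourite (top-ranked) object under `pi`. -/
def topObj [Fintype O] [Nonempty O] (pi : LinearOrder O) : O :=
  @Finset.max' O pi Finset.univ Finset.univ_nonempty

/-- `tau1 p` is the allocation assigning each agent her favourite object. -/
def tau1 [Fintype O] [Nonempty O] (p : N → LinearOrder O) : N → O :=
  fun i => topObj (p i)

/-- The strict lower contour set of `a` under `pi`, as a finset. -/
def LCfin [Fintype O] (pi : LinearOrder O) (a : O) : Finset O :=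
  Finset.univ.filter fun b => pi.lt b a

/-- The best element of the strict lower contour set of `a` (junk value `a` if empty). -/
def bestLC [Fintype O] (pi : LinearOrder O) (a : O) : O :=
  if h : (LCfin pi a).Nonempty then @Finset.max' O pi _ h else a

/-- At `x`, no local compromiser has an empty strict lower contour set. -/
def lpNoFail [Fintype O] (α : (N → O) → Set N) (p : N → LinearOrder O) (x : N → O) : Prop :=
  ∀ i ∈ α x, (LCfin (p i) (x i)).Nonempty

/-- One step of the local priority algorithm: all local compromisers move to their
next-favourite object, everyone else stays put. -/
def lpStep [Fintype O] (α : (N → O) → Set N) (p : N → LinearOrder O) (x : N → O) : N → O :=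
  fun k => if k ∈ α x then bestLC (p k) (x k) else x k

/-- The local priority algorithm for `α` at profile `p` terminates (without failure)
returning the feasible allocation `y`. -/
def lpRunsTo [Fintype O] [Nonempty O] (C : Set (N → O)) (α : (N → O) → Set N)
    (p : N → LinearOrder O) (y : N → O) : Prop :=
  ∃ (m : ℕ) (x : ℕ → N → O),
    x 0 = tau1 p ∧
    (∀ t < m, x t ∉ C ∧ lpNoFail α p (x t) ∧ x (t + 1) = lpStep α p (x t)) ∧
    x m = y ∧ y ∈ C

/-- `α` is a local compromiser assignment for the constraint `C`. -/
def IsLCA (C : Set (N → O)) (α : (N → O) → Set N) : Prop :=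
  ∀ x, (x ∉ C → (α x).Nonempty) ∧ (x ∈ C → α x = ∅)

/-- `α` is implementable: the local priority algorithm returns a feasible
allocation (never the failure symbol) on every profile. -/
def lpImplementable [Fintype O] [Nonempty O] (C : Set (N → O)) (α : (N → O) → Set N) : Prop :=
  ∀ p : N → LinearOrder O, ∃ y, lpRunsTo C α p y

/-- `α` is an implementable local compromiser assignment for `C` inducing the mechanism `f`,
i.e. `f = LP_α`. -/
def lpInduces [Fintype O] [Nonempty O] (C : Set (N → O)) (α : (N → O) → Set N)
    (f : (N → LinearOrder O) → N → O) : Prop :=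
  IsLCA C α ∧ ∀ p, lpRunsTo C α p (f p)

/-- The local priority mechanism `LP_α` (well defined whenever `α` is implementable,
since the algorithm is deterministic). -/
def LPmech [Fintype O] [Nonempty O] (C : Set (N → O)) (α : (N → O) → Set N)
    (p : N → LinearOrder O) : N → O :=
  if h : ∃ y, lpRunsTo C α p y then h.choose else fun _ => Classical.arbitrary O

/-- Group strategy-proofness. -/
def GSP (f : (N → LinearOrder O) → N → O) : Prop :=
  ∀ (p p' : N → LinearOrder O) (M : Set N), M.Nonempty → (∀ j ∉ M, p' j = p j) →
    ¬ ((∀ j ∈ M, wPref (p j) (f p' j) (f p j)) ∧ ∃ k ∈ M, sPref (p k) (f p' k) (f p k))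

/-- (Individual) strategy-proofness. -/
def StratProof (f : (N → LinearOrder O) → N → O) : Prop :=
  ∀ (p p' : N → LinearOrder O) (i : N), (∀ j, j ≠ i → p' j = p j) →
    ¬ sPref (p i) (f p' i) (f p i)

/-- Nonbossiness. -/
def Nonbossy (f : (N → LinearOrder O) → N → O) : Prop :=
  ∀ (p p' : N → LinearOrder O) (i : N), (∀ j, j ≠ i → p' j = p j) →
    f p' i = f p i → f p' = f p

/-- Maskin monotonicity. -/
def MaskinMono (f : (N → LinearOrder O) → N → O) : Prop :=
  ∀ p p' : N → LinearOrder O,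
    (∀ (i : N) (b : O), (p i).lt b (f p i) → (p' i).lt b (f p i)) → f p' = f p

/-- Unanimity. -/
def Unanimity [Fintype O] [Nonempty O] (C : Set (N → O))
    (f : (N → LinearOrder O) → N → O) : Prop :=
  ∀ p, tau1 p ∈ C → f p = tau1 p

/-- The Fixed compromiser condition. -/
def FixedComp [Fintype O] [Nonempty O] (C : Set (N → O))
    (f : (N → LinearOrder O) → N → O) : Prop :=
  ∀ μ, μ ∉ C → ∃ i : N, ∀ p, tau1 p = μ → f p i ≠ μ i

/-- `pi'` is obtained from `pi` by moving `c` to the bottom of the ranking. -/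
def MoveBottom (pi pi' : LinearOrder O) (c : O) : Prop :=
  (∀ b, b ≠ c → pi'.lt c b) ∧ (∀ a b, a ≠ c → b ≠ c → (pi'.lt a b ↔ pi.lt a b))

/-- Compromiser invariance. -/
def CompInv [Fintype O] [Nonempty O] (C : Set (N → O))
    (f : (N → LinearOrder O) → N → O) : Prop :=
  ∀ μ, μ ∉ C → ∀ p p' : N → LinearOrder O, tau1 p = μ →
    (∀ i, (∀ q, tau1 q = μ → f q i ≠ μ i) → MoveBottom (p i) (p' i) (μ i)) →
    (∀ i, ¬ (∀ q, tau1 q = μ → f q i ≠ μ i) → p' i = p i) →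
    f p' = f p

/-- Pareto efficiency relative to the constraint `C`. -/
def ParetoEff (C : Set (N → O)) (f : (N → LinearOrder O) → N → O) : Prop :=
  ∀ p, ¬ ∃ ν ∈ C, (∀ i, wPref (p i) (ν i) (f p i)) ∧ ∃ k, sPref (p k) (ν k) (f p k)

/-- `diffSet x y = d(x,y)`, the set of agents on which `x` and `y` differ. -/
def diffSet (x y : N → O) : Set N := {i | x i ≠ y i}

/-- Forward consistency. -/
def ForwardCons (α : (N → O) → Set N) : Prop :=
  ∀ x y : N → O, diffSet x y ⊆ α x → α x \ diffSet x y ⊆ α y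

/-- The sequence of allocations `z 0, …, z m` is acyclic. -/
def AcyclicSeq (z : ℕ → N → O) (m : ℕ) : Prop :=
  ∀ (i : N) (r s t : ℕ), r < s → s < t → t ≤ m → z r i = z t i → z s i = z r i

/-- `x` and `y` are `i`-connected under `α`. -/
def IConn (α : (N → O) → Set N) (i : N) (x y : N → O) : Prop :=
  ∃ m : ℕ, 1 ≤ m ∧ ∃ z : ℕ → N → O,
    z 0 = x ∧ z m = y ∧ AcyclicSeq z m ∧ diffSet (z 0) (z 1) = {i} ∧
    ∀ l < m, diffSet (z l) (z (l + 1)) ⊆ α (z l)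

/-- Backward consistency. -/
def BackCons (C : Set (N → O)) (α : (N → O) → Set N) : Prop :=
  ∀ (i : N) (x y : N → O), x ∉ C → y ∉ C → IConn α i x y →
    ∀ x' : N → O, diffSet x x' ⊆ α y → i ∉ diffSet x x' → i ∈ α x'

/-- The pointwise union of all implementable local compromiser assignments inducing `f`. -/
def alphaUnionAll [Fintype O] [Nonempty O] (C : Set (N → O))
    (f : (N → LinearOrder O) → N → O) : (N → O) → Set N :=
  fun x => {i | ∃ β, lpInduces C β f ∧ i ∈ β x}

end

namespace LPA
open Classical
set_option linter.unusedSectionVars false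

noncomputable section
variable {N O : Type}

/-! ### Order helpers -/

section OrderHelpers
variable [Fintype O] [Nonempty O] (pi : LinearOrder O)

lemma ple_refl (a : O) : pi.le a a := by letI := pi; exact le_refl a
lemma ple_trans {a b c : O} (h : pi.le a b) (h' : pi.le b c) : pi.le a c := by
  letI := pi; exact le_trans h h'
lemma ple_antisymm {a b : O} (h : pi.le a b) (h' : pi.le b a) : a = b := by
  letI := pi; exact le_antisymm h h'
lemma plt_iff {a b : O} : pi.lt a b ↔ pi.le a b ∧ a ≠ b := by
  letI := pi; exact lt_iff_le_and_ne
lemma plt_irrefl (a : O) : ¬ pi.lt a a := by letI := pi; exact lt_irrefl a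
lemma ple_of_lt {a b : O} (h : pi.lt a b) : pi.le a b := by letI := pi; exact le_of_lt h
lemma ple_total (a b : O) : pi.le a b ∨ pi.le b a := by letI := pi; exact le_total a b
lemma plt_of_le_ne {a b : O} (h : pi.le a b) (h' : a ≠ b) : pi.lt a b := by
  letI := pi; exact lt_of_le_of_ne h h'
lemma plt_of_le_of_lt {a b c : O} (h : pi.le a b) (h' : pi.lt b c) : pi.lt a c := by
  letI := pi; exact lt_of_le_of_lt h h'
lemma plt_of_lt_of_le {a b c : O} (h : pi.lt a b) (h' : pi.le b c) : pi.lt a c := by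
  letI := pi; exact lt_of_lt_of_le h h'
lemma pnot_lt {a b : O} (h : pi.le a b) : ¬ pi.lt b a := by letI := pi; exact not_lt_of_ge h
lemma ple_of_not_lt {a b : O} (h : ¬ pi.lt a b) : pi.le b a := by letI := pi; exact le_of_not_gt h

lemma ple_topObj (b : O) : pi.le b (topObj pi) := by
  letI := pi
  exact Finset.le_max' _ b (Finset.mem_univ b)

lemma bestLC_lt {a : O} (h : (LCfin pi a).Nonempty) : pi.lt (bestLC pi a) a := by
  letI := pi
  have hm : bestLC pi a ∈ LCfin pi a := by
    rw [bestLC, dif_pos h]; exact Finset.max'_mem _ _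
  simpa [LCfin] using (Finset.mem_filter.mp hm).2

lemma le_bestLC {a b : O} (h : (LCfin pi a).Nonempty) (hb : pi.lt b a) :
    pi.le b (bestLC pi a) := by
  letI := pi
  rw [bestLC, dif_pos h]
  exact Finset.le_max' _ b (by simp [LCfin, hb])

end OrderHelpers

/-! ### diffSet helpers -/

lemma diffSet_update {x : N → O} {j : N} {c : O} (h : c ≠ x j) :
    diffSet x (Function.update x j c) = {j} := by
  ext o
  by_cases ho : o = j <;> simp [diffSet, Function.update, ho, h.symm]

lemma mem_diffSet {x y : N → O} {o : N} : o ∈ diffSet x y ↔ x o ≠ y o := Iff.rfl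

/-! ### The run of the local priority algorithm -/

structure LPRun [Fintype O] [Nonempty O] (C : Set (N → O)) (α : (N → O) → Set N)
    (p : N → LinearOrder O) where
  m : ℕ
  x : ℕ → N → O
  h0 : x 0 = tau1 p
  hC : ∀ t < m, x t ∉ C
  hNF : ∀ t < m, lpNoFail α p (x t)
  hS : ∀ t < m, x (t + 1) = lpStep α p (x t)
  hmem : x m ∈ C

variable [Fintype O] [Nonempty O] {C : Set (N → O)} {α : (N → O) → Set N}
  {p : N → LinearOrder O}

lemma lpRunsTo_toRun {y : N → O} (h : lpRunsTo C α p y) :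
    ∃ R : LPRun C α p, R.x R.m = y := by
  obtain ⟨m, x, h0, hmid, hm, hyC⟩ := h
  exact ⟨⟨m, x, h0, fun t ht => (hmid t ht).1, fun t ht => (hmid t ht).2.1,
    fun t ht => (hmid t ht).2.2, hm ▸ hyC⟩, hm⟩

lemma LPRun.runsTo (R : LPRun C α p) : lpRunsTo C α p (R.x R.m) :=
  ⟨R.m, R.x, R.h0, fun t ht => ⟨R.hC t ht, R.hNF t ht, R.hS t ht⟩, rfl, R.hmem⟩

lemma lpRunsTo_unique {y₁ y₂ : N → O} (h₁ : lpRunsTo C α p y₁) (h₂ : lpRunsTo C α p y₂) :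
    y₁ = y₂ := by
  obtain ⟨m₁, x₁, e₁, f₁, g₁, yC₁⟩ := h₁
  obtain ⟨m₂, x₂, e₂, f₂, g₂, yC₂⟩ := h₂
  have key : ∀ (ma mb : ℕ) (xa xb : ℕ → N → O), ma ≤ mb →
      xa 0 = tau1 p → xb 0 = tau1 p →
      (∀ t < ma, xa t ∉ C ∧ lpNoFail α p (xa t) ∧ xa (t+1) = lpStep α p (xa t)) →
      (∀ t < mb, xb t ∉ C ∧ lpNoFail α p (xb t) ∧ xb (t+1) = lpStep α p (xb t)) →
      xa ma ∈ C → xb mb ∈ C → xa ma = xb mb := by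
    intro ma mb xa xb hle ea eb fa fb ca cb
    have agree : ∀ t ≤ ma, xa t = xb t := by
      intro t ht
      induction t with
      | zero => rw [ea, eb]
      | succ n ih =>
        have hn : n < ma := Nat.lt_of_succ_le ht
        have ihn := ih (le_of_lt hn)
        rw [(fa n hn).2.2, (fb n (lt_of_lt_of_le hn hle)).2.2, ihn]
    rcases eq_or_lt_of_le hle with rfl | hlt
    · exact agree ma le_rfl
    · exact absurd ((agree ma le_rfl) ▸ ca) (fb ma hlt).1
  subst g₁; subst g₂
  rcases le_total m₁ m₂ with h | h
  · exact key m₁ m₂ x₁ x₂ h e₁ e₂ f₁ f₂ yC₁ yC₂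
  · exact (key m₂ m₁ x₂ x₁ h e₂ e₁ f₂ f₁ yC₂ yC₁).symm

lemma LPmech_runsTo (himp : lpImplementable C α) (p : N → LinearOrder O) :
    lpRunsTo C α p (LPmech C α p) := by
  rw [LPmech, dif_pos (himp p)]
  exact (himp p).choose_spec

lemma LPRun.out_eq (R : LPRun C α p) (himp : lpImplementable C α) :
    LPmech C α p = R.x R.m :=
  lpRunsTo_unique (LPmech_runsTo himp p) R.runsTo

end
end LPA
namespace LPA
open Classical
set_option linter.unusedSectionVars false
noncomputable section
variable {N O : Type} [Fintype O] [Nonempty O] {C : Set (N → O)} {α : (N → O) → Set N}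
  {p : N → LinearOrder O}

lemma notC_of_mem_alpha (hlca : IsLCA C α) {u : N → O} {i : N} (h : i ∈ α u) : u ∉ C :=
  fun hu => by simp [(hlca u).2 hu] at h

namespace LPRun
variable (R : LPRun C α p)

lemma step_eq {t : ℕ} (ht : t < R.m) {i : N} (hi : i ∉ α (R.x t)) :
    R.x (t + 1) i = R.x t i := by
  rw [R.hS t ht]; simp [lpStep, hi]

lemma step_lt {t : ℕ} (ht : t < R.m) {i : N} (hi : i ∈ α (R.x t)) :
    (p i).lt (R.x (t + 1) i) (R.x t i) := by
  rw [R.hS t ht]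
  simp only [lpStep, hi, if_pos]
  exact bestLC_lt _ (R.hNF t ht i hi)

lemma step_pred {t : ℕ} (ht : t < R.m) {i : N} (hi : i ∈ α (R.x t)) {b : O}
    (hb : (p i).lt b (R.x t i)) : (p i).le b (R.x (t + 1) i) := by
  rw [R.hS t ht]
  simp only [lpStep, hi, if_pos]
  exact le_bestLC _ (R.hNF t ht i hi) hb

lemma step_le {t : ℕ} (ht : t < R.m) (i : N) : (p i).le (R.x (t + 1) i) (R.x t i) := by
  by_cases hi : i ∈ α (R.x t)
  · exact ple_of_lt _ (R.step_lt ht hi)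
  · rw [R.step_eq ht hi]; exact ple_refl _ _

lemma mono {s t : ℕ} (hst : s ≤ t) (ht : t ≤ R.m) (i : N) :
    (p i).le (R.x t i) (R.x s i) := by
  induction t with
  | zero => cases Nat.le_zero.mp hst; exact ple_refl _ _
  | succ n ih =>
    rcases Nat.lt_or_ge s (n+1) with h | h
    · exact ple_trans _ (R.step_le (Nat.lt_of_succ_le ht) i)
        (ih (Nat.lt_succ_iff.mp h) (le_of_lt (Nat.lt_of_succ_le ht)))
    · cases le_antisymm hst h; exact ple_refl _ _

lemma le_start (t : ℕ) (ht : t ≤ R.m) (i : N) (b : O) :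
    (p i).le (R.x t i) (R.x 0 i) := R.mono (Nat.zero_le t) ht i

lemma top_le (i : N) (b : O) : (p i).le b (R.x 0 i) := by
  rw [R.h0]; exact ple_topObj _ b

lemma diff_step {t : ℕ} (ht : t < R.m) : diffSet (R.x t) (R.x (t + 1)) = α (R.x t) := by
  ext i
  constructor
  · intro h
    by_contra hi
    exact h (R.step_eq ht hi).symm
  · intro hi
    exact fun he => plt_irrefl (p i) (R.x t i) (he ▸ R.step_lt ht hi)

lemma alpha_last (hlca : IsLCA C α) : α (R.x R.m) = ∅ := (hlca _).2 R.hmem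

/-- The "leave time": if `c` is weakly below the current position of `i` at time `t` and
strictly above the final object, then at some step `s ≥ t` agent `i` holds `c` and compromises. -/
lemma leave : ∀ (d t : ℕ), R.m - t ≤ d → t ≤ R.m → ∀ (i : N) (c : O),
    (p i).le c (R.x t i) → (p i).lt (R.x R.m i) c →
    ∃ s, t ≤ s ∧ s < R.m ∧ R.x s i = c ∧ i ∈ α (R.x s) := by
  intro d
  induction d with
  | zero =>
    intro t hd ht i c hc hfin
    have : t = R.m := le_antisymm ht (Nat.sub_eq_zero_iff_le.mp (Nat.le_zero.mp hd))
    subst this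
    exact absurd hfin (pnot_lt _ hc)
  | succ d ih =>
    intro t hd ht i c hc hfin
    have htm : t < R.m := by
      rcases lt_or_eq_of_le ht with h | h
      · exact h
      · subst h; exact absurd hfin (pnot_lt _ hc)
    have hd' : R.m - (t + 1) ≤ d := by omega
    by_cases hct : c = R.x t i
    · by_cases hi : i ∈ α (R.x t)
      · exact ⟨t, le_rfl, htm, hct.symm, hi⟩
      · have : (p i).le c (R.x (t+1) i) := by
          rw [R.step_eq htm hi, ← hct]; exact ple_refl _ _
        obtain ⟨s, hs1, hs2, hs3, hs4⟩ := ih (t+1) hd' htm i c this hfin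
        exact ⟨s, le_trans (Nat.le_succ t) hs1, hs2, hs3, hs4⟩
    · have hlt : (p i).lt c (R.x t i) := plt_of_le_ne _ hc hct
      have : (p i).le c (R.x (t+1) i) := by
        by_cases hi : i ∈ α (R.x t)
        · exact R.step_pred htm hi hlt
        · rw [R.step_eq htm hi]; exact hc
      obtain ⟨s, hs1, hs2, hs3, hs4⟩ := ih (t+1) hd' htm i c this hfin
      exact ⟨s, le_trans (Nat.le_succ t) hs1, hs2, hs3, hs4⟩

end LPRun

/-- monotone sequences are acyclic -/
lemma acyclic_of_monotone (q : N → LinearOrder O) (z : ℕ → N → O) (M : ℕ)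
    (h : ∀ o, ∀ l, l < M → (q o).le (z (l+1) o) (z l o)) : AcyclicSeq z M := by
  have mono : ∀ o, ∀ l l', l ≤ l' → l' ≤ M → (q o).le (z l' o) (z l o) := by
    intro o l l' hll' hl'
    induction l' with
    | zero => cases Nat.le_zero.mp hll'; exact ple_refl _ _
    | succ n ih =>
      rcases Nat.lt_or_ge l (n+1) with hh | hh
      · exact ple_trans _ (h o n (Nat.lt_of_succ_le hl'))
          (ih (Nat.lt_succ_iff.mp hh) (le_of_lt (Nat.lt_of_succ_le hl')))
      · cases le_antisymm hll' hh; exact ple_refl _ _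
  intro i r s t hrs hst htM heq
  have h1 : (q i).le (z t i) (z s i) := mono i s t (le_of_lt hst) htM
  have h2 : (q i).le (z s i) (z r i) := mono i r s (le_of_lt hrs) (le_trans (le_of_lt hst) htM)
  exact ple_antisymm _ h2 (heq ▸ h1)

lemma fc_mem (hfc : ForwardCons α) {x y : N → O} {i : N} (hd : diffSet x y ⊆ α x)
    (hi : i ∈ α x) (hni : i ∉ diffSet x y) : i ∈ α y :=
  hfc x y hd ⟨hi, hni⟩

end
end LPA
namespace LPA
open Classical
set_option linter.unusedSectionVars false
set_option maxHeartbeats 1000000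
noncomputable section
variable {N O : Type} [Fintype N] [Fintype O] [Nonempty O] {C : Set (N → O)}
  {α : (N → O) → Set N} {p : N → LinearOrder O}

/-- **(P1)** If `u` lies pointwise between the final outcome and the run state `x t`,
and `k` is a compromiser at `x t` with `u k = x t k`, then `k` is a compromiser at `u`. -/
lemma P1 (hlca : IsLCA C α) (hfc : ForwardCons α) (hbc : BackCons C α) (R : LPRun C α p) :
    ∀ (d t : ℕ), R.m - t ≤ d → t ≤ R.m →
    ∀ u : N → O, (∀ o, (p o).le (R.x R.m o) (u o) ∧ (p o).le (u o) (R.x t o)) →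
    ∀ k, k ∈ α (R.x t) → u k = R.x t k → k ∈ α u := by
  intro d
  induction d with
  | zero =>
    intro t hd ht u hu k hk huk
    have : t = R.m := le_antisymm ht (by omega)
    subst this
    rw [R.alpha_last hlca] at hk
    exact absurd hk (Set.notMem_empty k)
  | succ d IHd =>
    intro t hd ht u hu k hk huk
    have htm : t < R.m := by
      rcases lt_or_eq_of_le ht with h | h
      · exact h
      · exfalso; subst h; rw [R.alpha_last hlca] at hk; exact hk
    -- inner induction on the number of lowered coordinates
    have inner : ∀ n : ℕ, ∀ u : N → O,
        (Finset.univ.filter (fun o => u o ≠ R.x t o)).card ≤ n →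
        (∀ o, (p o).le (R.x R.m o) (u o) ∧ (p o).le (u o) (R.x t o)) →
        ∀ k, k ∈ α (R.x t) → u k = R.x t k → k ∈ α u := by
      intro n
      induction n with
      | zero =>
        intro u hcard hu k hk huk
        have : u = R.x t := by
          funext o
          by_contra ho
          have : o ∈ Finset.univ.filter (fun o => u o ≠ R.x t o) := by simp [ho]
          rw [Finset.card_eq_zero.mp (Nat.le_zero.mp hcard)] at this
          exact absurd this (Finset.notMem_empty o)
        rw [this]; exact hk
      | succ n ihn =>
        intro u hcard hu k hk huk
        by_cases hzero : (Finset.univ.filter (fun o => u o ≠ R.x t o)).card = 0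
        · exact ihn u (by omega) hu k hk huk
        obtain ⟨j, hj⟩ := Finset.card_pos.mp (Nat.pos_of_ne_zero hzero)
        have hju : u j ≠ R.x t j := (Finset.mem_filter.mp hj).2
        set v : N → O := Function.update u j (R.x t j) with hv
        have hkj : k ≠ j := fun h => hju (h ▸ huk)
        have hvo : ∀ o, o ≠ j → v o = u o := fun o ho => Function.update_of_ne ho _ _
        have hvj : v j = R.x t j := Function.update_self _ _ _
        have hvsand : ∀ o, (p o).le (R.x R.m o) (v o) ∧ (p o).le (v o) (R.x t o) := by
          intro o
          by_cases ho : o = j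
          · subst ho
            exact ⟨hvj ▸ R.mono ht le_rfl o, hvj ▸ ple_refl _ _⟩
          · rw [hvo o ho]; exact hu o
        have hvcard : (Finset.univ.filter (fun o => v o ≠ R.x t o)).card ≤ n := by
          have hset : (Finset.univ.filter (fun o => v o ≠ R.x t o)) =
              (Finset.univ.filter (fun o => u o ≠ R.x t o)).erase j := by
            ext o
            by_cases ho : o = j
            · subst ho; simp [hvj]
            · simp [Finset.mem_erase, ho, hvo o ho]
          rw [hset, Finset.card_erase_of_mem hj]
          omega
        -- inner IH applied to v
        have hWv : ∀ o, o ∈ α (R.x t) → v o = R.x t o → o ∈ α v :=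
          fun o ho hvo' => ihn v hvcard hvsand o ho hvo'
        have hkv : k ∈ α v := hWv k hk (by rw [hvo k hkj]; exact huk)
        have hdvu : diffSet v u = {j} := by
          ext o
          by_cases ho : o = j
          · subst ho; simp [diffSet, hvj, Ne.symm hju]
          · simp [diffSet, ho, hvo o ho]
        by_cases hjα : j ∈ α (R.x t)
        · -- easy case: forward consistency from v
          have hjv : j ∈ α v := hWv j hjα hvj
          have : diffSet v u ⊆ α v := by rw [hdvu]; simpa using hjv
          have := hfc v u this
          apply this
          refine ⟨hkv, ?_⟩
          rw [hdvu]; simpa using hkj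
        · -- hard case: backward consistency via the run
          have hjylt : (p j).lt (R.x R.m j) (R.x t j) :=
            plt_of_le_of_lt _ (hu j).1 (plt_of_le_ne _ (hu j).2 hju)
          obtain ⟨s₃, hs₃t, hs₃m, hs₃x, hs₃α⟩ :=
            R.leave (R.m - t) t le_rfl ht j (R.x t j) (ple_refl _ _) hjylt
          have hts₃ : t < s₃ := lt_of_le_of_ne hs₃t (fun h => hjα (h ▸ hs₃α))
          set z1 : N → O := Function.update v k (R.x (t+1) k) with hz1
          set z2 : N → O := fun o =>
            if o ∈ α (R.x t) ∧ v o = R.x t o then R.x (t+1) o else v o with hz2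
          set G : ℕ → N → O := fun s o =>
            if (p o).le (z2 o) (R.x s o) then z2 o else R.x s o with hG
          -- facts about z2
          have hz2k : z2 k = R.x (t+1) k := by
            rw [hz2]; simp only []
            rw [if_pos ⟨hk, by rw [hvo k hkj]; exact huk⟩]
          have hz2j : z2 j = R.x t j := by
            rw [hz2]; simp only []
            rw [if_neg (fun h => hjα h.1), hvj]
          have hz2le : ∀ o, (p o).le (z2 o) (R.x (t+1) o) := by
            intro o
            rw [hz2]; simp only []
            split
            · exact ple_refl _ _
            · rename_i hcond
              by_cases ho : o ∈ α (R.x t)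
              · have : v o ≠ R.x t o := fun h => hcond ⟨ho, h⟩
                exact R.step_pred htm ho (plt_of_le_ne _ (hvsand o).2 this)
              · rw [R.step_eq htm ho]; exact (hvsand o).2
          have hz2ge : ∀ o, (p o).le (R.x R.m o) (z2 o) := by
            intro o
            rw [hz2]; simp only []
            split
            · exact R.mono htm le_rfl o
            · exact (hvsand o).1
          -- facts about G
          have hGle : ∀ s o, (p o).le (G s o) (R.x s o) := by
            intro s o
            rw [hG]; simp only []
            split
            · assumption
            · exact ple_refl _ _
          have hGge : ∀ s, s ≤ R.m → ∀ o, (p o).le (R.x R.m o) (G s o) := by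
            intro s hs o
            rw [hG]; simp only []
            split
            · exact hz2ge o
            · exact R.mono hs le_rfl o
          have hGsand : ∀ s, s ≤ R.m → ∀ o,
              (p o).le (R.x R.m o) (G s o) ∧ (p o).le (G s o) (R.x s o) :=
            fun s hs o => ⟨hGge s hs o, hGle s o⟩
          have hGt1 : G (t+1) = z2 := by
            funext o
            rw [hG]; simp only []
            rw [if_pos (hz2le o)]
          set w : N → O := G s₃ with hw
          have hwj : w j = R.x t j := by
            rw [hw, hG]; simp only []
            rw [hs₃x, hz2j]
            split <;> rfl
          -- movers along the G-path
          have hGstep : ∀ s, t + 1 ≤ s → s < s₃ → ∀ o, G s o ≠ G (s+1) o →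
              o ∈ α (R.x s) ∧ G s o = R.x s o ∧ G (s+1) o = R.x (s+1) o := by
            intro s hs1 hs2 o hne
            have hsm : s < R.m := lt_trans hs2 hs₃m
            by_cases ho : o ∈ α (R.x s)
            · by_cases hc2 : (p o).le (z2 o) (R.x (s+1) o)
              · exfalso
                apply hne
                rw [hG]; simp only []
                rw [if_pos hc2, if_pos (ple_trans _ hc2 (R.step_le hsm o))]
              · have hxz : (p o).le (R.x s o) (z2 o) := by
                  by_contra hcon
                  have h1 : (p o).lt (z2 o) (R.x s o) :=
                    plt_of_le_ne _ ((ple_total _ _ _).resolve_right hcon) (fun h => hcon (h ▸ ple_refl _ _))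
                  exact hc2 (R.step_pred hsm ho h1)
                have hG1 : G s o = R.x s o := by
                  rw [hG]; simp only []
                  split
                  · exact ple_antisymm _ (by assumption) hxz
                  · rfl
                have hG2 : G (s+1) o = R.x (s+1) o := by
                  rw [hG]; simp only []
                  rw [if_neg hc2]
                exact ⟨ho, hG1, hG2⟩
            · exfalso
              apply hne
              rw [hG]; simp only []
              rw [R.step_eq hsm ho]
          have hGmem : ∀ s, t + 1 ≤ s → s < s₃ → diffSet (G s) (G (s+1)) ⊆ α (G s) := by
            intro s hs1 hs2 o ho
            obtain ⟨h1, h2, h3⟩ := hGstep s hs1 hs2 o ho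
            have hsm : s ≤ R.m := le_of_lt (lt_trans hs2 hs₃m)
            have hd' : R.m - s ≤ d := by omega
            exact IHd s hd' hsm (G s) (hGsand s hsm) o h1 h2
          have hjw : j ∈ α w := by
            have hd' : R.m - s₃ ≤ d := by omega
            exact IHd s₃ hd' (le_of_lt hs₃m) w (hGsand s₃ (le_of_lt hs₃m)) j hs₃α
              (by rw [hwj, hs₃x])
          -- the path
          set Mℓ : ℕ := s₃ - t + 1 with hMℓ
          have hMℓ2 : 2 ≤ Mℓ := by rw [hMℓ]; omega
          set z : ℕ → N → O := fun l => if l = 0 then v else if l = 1 then z1 else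
            G (t + l - 1) with hzdef
          have hz0 : z 0 = v := by simp [hzdef]
          have hz1' : z 1 = z1 := by rw [hzdef]; simp
          have hz2' : ∀ l, 2 ≤ l → z l = G (t + l - 1) := by
            intro l hl
            rw [hzdef]; simp only []
            rw [if_neg (by omega), if_neg (by omega)]
          have hzM : z Mℓ = w := by
            have he : t + Mℓ - 1 = s₃ := by rw [hMℓ]; omega
            rw [hz2' Mℓ hMℓ2, he, hw]
          have hx1k : R.x (t+1) k ≠ v k := by
            have := R.step_lt htm hk
            intro h
            rw [h, hvo k hkj, huk] at this
            exact plt_irrefl _ _ this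
          have hdvz1 : diffSet v z1 = {k} := diffSet_update hx1k
          have hαz1 : ∀ o, o ∈ α v → o ≠ k → o ∈ α z1 := by
            intro o ho hok
            refine fc_mem hfc ?_ ho ?_
            · rw [hdvz1]; simpa using hkv
            · rw [hdvz1]; simpa using hok
          have hdz1z2 : diffSet z1 z2 ⊆ α z1 := by
            intro o ho
            rw [mem_diffSet] at ho
            have hok : o ≠ k := by
              intro h; subst h
              rw [hz1, Function.update_self, hz2k] at ho
              exact ho rfl
            have hoW : o ∈ α (R.x t) ∧ v o = R.x t o := by
              by_contra hcon
              rw [hz1, Function.update_of_ne hok] at ho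
              rw [hz2] at ho; simp only [] at ho
              rw [if_neg hcon] at ho
              exact ho rfl
            exact hαz1 o (hWv o hoW.1 hoW.2) hok
          -- monotonicity of the path
          have hmono : ∀ o l, l < Mℓ → (p o).le (z (l+1) o) (z l o) := by
            intro o l hl
            rcases Nat.lt_or_ge l 1 with h0 | h1
            · interval_cases l
              rw [hz0, hz1', hz1]
              by_cases ho : o = k
              · rw [ho, Function.update_self]
                exact ple_of_lt _ (by rw [hvo k hkj, huk]; exact R.step_lt htm hk)
              · rw [Function.update_of_ne ho]; exact ple_refl _ _
            rcases Nat.lt_or_ge l 2 with h1' | h2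
            · have : l = 1 := by omega
              subst this
              rw [hz1', hz2' 2 le_rfl]
              have : t + 2 - 1 = t + 1 := by omega
              rw [this, hGt1]
              by_cases ho : o = k
              · rw [ho, hz1, Function.update_self, hz2k]
                exact ple_refl _ _
              · rw [hz1, Function.update_of_ne ho]
                rw [hz2]; simp only []
                split
                · rename_i hcond
                  rw [hcond.2]
                  exact ple_of_lt _ (R.step_lt htm hcond.1)
                · exact ple_refl _ _
            · rw [hz2' l h2, hz2' (l+1) (by omega)]
              have hle : t + (l+1) - 1 = (t + l - 1) + 1 := by omega
              rw [hle]
              set s := t + l - 1 with hs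
              have hsm : s < R.m := by
                have : s < s₃ := by omega
                exact lt_trans this hs₃m
              rw [hG]; simp only []
              by_cases c1 : (p o).le (z2 o) (R.x s o)
              · rw [if_pos c1]
                by_cases c2 : (p o).le (z2 o) (R.x (s+1) o)
                · rw [if_pos c2]; exact ple_refl _ _
                · rw [if_neg c2]
                  exact (ple_total _ _ _).resolve_left c2
              · rw [if_neg c1]
                by_cases c2 : (p o).le (z2 o) (R.x (s+1) o)
                · rw [if_pos c2]
                  exact ple_trans _ c2 (R.step_le hsm o)
                · rw [if_neg c2]
                  exact R.step_le hsm o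
          have hacyc : AcyclicSeq z Mℓ := acyclic_of_monotone p z Mℓ (fun o l hl => hmono o l hl)
          have hIConn : IConn α k v w := by
            refine ⟨Mℓ, by omega, z, hz0, hzM, hacyc, by rw [hz0, hz1']; exact hdvz1, ?_⟩
            intro l hl
            rcases Nat.lt_or_ge l 1 with h0 | h1
            · interval_cases l
              rw [hz0, hz1', hdvz1]
              simpa using hkv
            rcases Nat.lt_or_ge l 2 with h1' | h2
            · have : l = 1 := by omega
              subst this
              rw [hz1', hz2' 2 le_rfl]
              have h21 : t + 2 - 1 = t + 1 := by omega
              rw [h21, hGt1]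
              exact hdz1z2
            · rw [hz2' l h2, hz2' (l+1) (by omega)]
              have hle : t + (l+1) - 1 = (t + l - 1) + 1 := by omega
              rw [hle]
              exact hGmem (t + l - 1) (by omega) (by omega)
          -- finally, backward consistency
          have hvC : v ∉ C := notC_of_mem_alpha hlca hkv
          have hwC : w ∉ C := notC_of_mem_alpha hlca hjw
          have := hbc k v w hvC hwC hIConn u (by rw [hdvu]; simpa using hjw)
            (by rw [hdvu]; simpa using hkj)
          exact this
    exact inner (Finset.univ.filter (fun o => u o ≠ R.x t o)).card u le_rfl hu k hk huk

end
end LPA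
namespace LPA
open Classical
set_option linter.unusedSectionVars false
set_option maxHeartbeats 1000000
noncomputable section
variable {N O : Type} [Fintype N] [Fintype O] [Nonempty O] {C : Set (N → O)}
  {α : (N → O) → Set N} {p : N → LinearOrder O}

lemma sand_at_m (R : LPRun C α p) {u : N → O}
    (hu : ∀ o, (p o).le (R.x R.m o) (u o) ∧ (p o).le (u o) (R.x R.m o)) : u = R.x R.m := by
  funext o
  exact ple_antisymm _ (hu o).2 (hu o).1

lemma sand_up (R : LPRun C α p) {t : ℕ} (htm : t < R.m) {u : N → O}
    (hu : ∀ o, (p o).le (R.x R.m o) (u o) ∧ (p o).le (u o) (R.x t o))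
    (hW : ∀ o, o ∈ α (R.x t) → u o ≠ R.x t o) :
    ∀ o, (p o).le (R.x R.m o) (u o) ∧ (p o).le (u o) (R.x (t+1) o) := by
  intro o
  refine ⟨(hu o).1, ?_⟩
  by_cases ho : o ∈ α (R.x t)
  · exact R.step_pred htm ho (plt_of_le_ne _ (hu o).2 (hW o ho))
  · rw [R.step_eq htm ho]; exact (hu o).2

lemma mover_above (R : LPRun C α p) {t : ℕ} (htm : t < R.m) {o : N}
    (ho : o ∈ α (R.x t)) : (p o).lt (R.x R.m o) (R.x t o) :=
  plt_of_le_of_lt _ (R.mono htm le_rfl o) (R.step_lt htm ho)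

/-- **(P2)**: at any allocation in the sandwich, compromisers are strictly above
their final object. -/
lemma P2 (hlca : IsLCA C α) (hfc : ForwardCons α) (hbc : BackCons C α) (R : LPRun C α p) :
    ∀ (d t : ℕ), R.m - t ≤ d → t ≤ R.m →
    ∀ u : N → O, (∀ o, (p o).le (R.x R.m o) (u o) ∧ (p o).le (u o) (R.x t o)) →
    ∀ j, j ∈ α u → u j ≠ R.x R.m j := by
  intro d
  induction d with
  | zero =>
    intro t hd ht u hu j hj huj
    have htm : t = R.m := le_antisymm ht (by omega)
    subst htm
    rw [sand_at_m R hu, R.alpha_last hlca] at hj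
    exact hj
  | succ d IHd =>
    intro t hd ht u hu j hj huj
    rcases eq_or_lt_of_le ht with heq | htm
    · subst heq
      rw [sand_at_m R hu, R.alpha_last hlca] at hj
      exact hj
    have hd' : R.m - (t+1) ≤ d := by omega
    by_cases hW : ∀ o, o ∈ α (R.x t) → u o ≠ R.x t o
    · exact IHd (t+1) hd' htm u (sand_up R htm hu hW) j hj huj
    · push_neg at hW
      set zz : N → O := fun o =>
        if o ∈ α (R.x t) ∧ u o = R.x t o then R.x (t+1) o else u o with hzz
      have hjcond : ¬ (j ∈ α (R.x t) ∧ u j = R.x t j) := by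
        rintro ⟨h1, h2⟩
        have := mover_above R htm h1
        rw [← h2, huj] at this
        exact plt_irrefl _ _ this
      have hzzj : zz j = u j := by rw [hzz]; simp only []; rw [if_neg hjcond]
      have hdiff : diffSet u zz ⊆ α u := by
        intro o ho
        rw [mem_diffSet] at ho
        have hcond : o ∈ α (R.x t) ∧ u o = R.x t o := by
          by_contra hcon
          rw [hzz] at ho; simp only [] at ho
          rw [if_neg hcon] at ho
          exact ho rfl
        exact P1 hlca hfc hbc R (R.m - t) t le_rfl ht u hu o hcond.1 hcond.2
      have hjzz : j ∈ α zz := by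
        refine fc_mem hfc hdiff hj ?_
        rw [mem_diffSet]
        rw [hzzj]
        exact fun h => h rfl
      have hzzsand : ∀ o, (p o).le (R.x R.m o) (zz o) ∧ (p o).le (zz o) (R.x (t+1) o) := by
        intro o
        rw [hzz]; simp only []
        split
        · exact ⟨R.mono htm le_rfl o, ple_refl _ _⟩
        · rename_i hcon
          refine ⟨(hu o).1, ?_⟩
          by_cases ho : o ∈ α (R.x t)
          · have : u o ≠ R.x t o := fun h => hcon ⟨ho, h⟩
            exact R.step_pred htm ho (plt_of_le_ne _ (hu o).2 this)
          · rw [R.step_eq htm ho]; exact (hu o).2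
      exact IHd (t+1) hd' htm zz hzzsand j hjzz (by rw [hzzj]; exact huj)

/-- **(P3)**: the only feasible allocation in the sandwich is the outcome. -/
lemma P3 (hlca : IsLCA C α) (hfc : ForwardCons α) (hbc : BackCons C α) (R : LPRun C α p) :
    ∀ (d t : ℕ), R.m - t ≤ d → t ≤ R.m →
    ∀ u : N → O, (∀ o, (p o).le (R.x R.m o) (u o) ∧ (p o).le (u o) (R.x t o)) →
    u ∈ C → u = R.x R.m := by
  intro d
  induction d with
  | zero =>
    intro t hd ht u hu _
    have htm : t = R.m := le_antisymm ht (by omega)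
    subst htm
    exact sand_at_m R hu
  | succ d IHd =>
    intro t hd ht u hu huC
    rcases eq_or_lt_of_le ht with heq | htm
    · subst heq; exact sand_at_m R hu
    have hd' : R.m - (t+1) ≤ d := by omega
    by_cases hW : ∀ o, o ∈ α (R.x t) → u o ≠ R.x t o
    · exact IHd (t+1) hd' htm u (sand_up R htm hu hW) huC
    · push_neg at hW
      obtain ⟨o, ho1, ho2⟩ := hW
      have : o ∈ α u := P1 hlca hfc hbc R (R.m - t) t le_rfl ht u hu o ho1 ho2
      rw [(hlca u).2 huC] at this
      exact absurd this (Set.notMem_empty o)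

end
end LPA
namespace LPA
open Classical
set_option linter.unusedSectionVars false
set_option maxHeartbeats 1000000
noncomputable section
variable {N O : Type} [Fintype N] [Fintype O] [Nonempty O] {C : Set (N → O)}
  {α : (N → O) → Set N}

lemma wPref_le {pi : LinearOrder O} {a b : O} (h : wPref pi a b) : pi.le b a := by
  rcases h with h | h
  · subst h; exact ple_refl _ _
  · exact ple_of_lt _ h

/-- **Target**: a single-agent deviation that does not hurt the deviator
does not change the outcome at all. -/
lemma target (hlca : IsLCA C α) (hfc : ForwardCons α) (hbc : BackCons C α)
    (himp : lpImplementable C α) (p p' : N → LinearOrder O) (i : N)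
    (hdiff : ∀ j, j ≠ i → p' j = p j)
    (hw : wPref (p i) (LPmech C α p' i) (LPmech C α p i)) :
    LPmech C α p' = LPmech C α p := by
  classical
  obtain ⟨R, hR⟩ := lpRunsTo_toRun (LPmech_runsTo himp p)
  obtain ⟨R', hR'⟩ := lpRunsTo_toRun (LPmech_runsTo himp p')
  rw [← hR, ← hR'] at hw ⊢
  set y : N → O := R.x R.m with hy
  set y' : N → O := R'.x R'.m with hy'
  have hyle : (p i).le (y i) (y' i) := wPref_le hw
  -- the invariant along the deviant run
  have INV : ∀ s, s ≤ R'.m → ∀ j, j ≠ i → (p j).le (y j) (R'.x s j) := by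
    intro s
    induction s with
    | zero =>
      intro _ j hj
      rw [R'.h0, ← hdiff j hj]
      exact ple_topObj _ _
    | succ s IH =>
      intro hs1 j hj
      have hsm : s < R'.m := Nat.lt_of_succ_le hs1
      have IHs := IH (le_of_lt hsm)
      by_cases hjα : j ∈ α (R'.x s)
      · by_cases hcross : R'.x s j = y j
        · -- the violation case: derive False
          exfalso
          set j' := j with hj'
          by_cases hex : ∃ r, s ≤ r ∧ r < R'.m ∧ i ∈ α (R'.x r)
          · obtain ⟨r, hrs, hrm, hir⟩ := hex
            by_cases hyi : R'.x s i = y i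
            · -- R'.x s is itself in the sandwich
              have hsand : ∀ o, (p o).le (y o) (R'.x s o) ∧ (p o).le (R'.x s o) (R.x 0 o) := by
                intro o
                refine ⟨?_, R.top_le o _⟩
                by_cases ho : o = i
                · subst ho; rw [hyi]; exact ple_refl _ _
                · exact IH (le_of_lt hsm) o ho
              exact P2 hlca hfc hbc R R.m 0 (by omega) (Nat.zero_le _) (R'.x s) hsand j hjα hcross
            · -- build the i-connection and apply backward consistency
              set z1 : N → O := Function.update (R'.x s) j (R'.x (s+1) j) with hz1
              have hmove : R'.x (s+1) j ≠ R'.x s j :=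
                fun h => plt_irrefl (p' j) _ (h ▸ R'.step_lt hsm hjα)
              have hdz1 : diffSet (R'.x s) z1 = {j} := diffSet_update hmove
              have hαz1 : ∀ o, o ∈ α (R'.x s) → o ≠ j → o ∈ α z1 := by
                intro o ho hoj
                refine fc_mem hfc ?_ ho ?_
                · rw [hdz1]; simpa using hjα
                · rw [hdz1]; simpa using hoj
              obtain ⟨y₀, hy₀i, hIC⟩ :
                  ∃ y₀, i ∈ α y₀ ∧ IConn α j (R'.x s) y₀ := by
                rcases eq_or_lt_of_le hrs with hrs' | hrs' 
                · -- r = s : use z1 as endpoint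
                  set q2 : ℕ → N → O := fun l => if l = 0 then R'.x s else z1 with hq2
                  have hq20 : q2 0 = R'.x s := by simp [hq2]
                  have hq21 : q2 1 = z1 := by simp [hq2]
                  refine ⟨z1, hαz1 i (hrs' ▸ hir) (Ne.symm hj), 1, le_rfl,
                    q2, hq20, hq21, ?_, by rw [hq20, hq21]; exact hdz1, ?_⟩
                  · apply acyclic_of_monotone p'
                    intro o l hl
                    interval_cases l
                    rw [hq20, hq21, hz1]
                    by_cases ho : o = j
                    · rw [ho, Function.update_self]
                      exact ple_of_lt _ (R'.step_lt hsm hjα)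
                    · rw [Function.update_of_ne ho]; exact ple_refl _ _
                  · intro l hl
                    interval_cases l
                    rw [hq20, hq21, hdz1]
                    simpa using hjα
                · -- r > s : follow the run
                  set Mp : ℕ := r - s + 1 with hMp
                  have hMp2 : 2 ≤ Mp := by rw [hMp]; omega
                  set z : ℕ → N → O := fun l => if l = 0 then R'.x s else if l = 1 then z1
                    else R'.x (s + l - 1) with hzdef
                  have hz0 : z 0 = R'.x s := by simp [hzdef]
                  have hz1' : z 1 = z1 := by simp [hzdef]
                  have hz2' : ∀ l, 2 ≤ l → z l = R'.x (s + l - 1) := by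
                    intro l hl
                    rw [hzdef]; simp only []
                    rw [if_neg (by omega), if_neg (by omega)]
                  have hzM : z Mp = R'.x r := by
                    have he : s + Mp - 1 = r := by rw [hMp]; omega
                    rw [hz2' Mp hMp2, he]
                  refine ⟨R'.x r, hir, Mp, by omega, z, hz0, hzM, ?_, by rw [hz0, hz1']; exact hdz1, ?_⟩
                  · apply acyclic_of_monotone p'
                    intro o l hl
                    rcases Nat.lt_or_ge l 1 with h0 | h1
                    · interval_cases l
                      rw [hz0, hz1', hz1]
                      by_cases ho : o = j
                      · rw [ho, Function.update_self]
                        exact ple_of_lt _ (R'.step_lt hsm hjα)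
                      · rw [Function.update_of_ne ho]; exact ple_refl _ _
                    rcases Nat.lt_or_ge l 2 with h1' | h2
                    · have : l = 1 := by omega
                      subst this
                      rw [hz1', hz2' 2 le_rfl]
                      have he : s + 2 - 1 = s + 1 := by omega
                      rw [he, hz1]
                      by_cases ho : o = j
                      · rw [ho, Function.update_self]; exact ple_refl _ _
                      · rw [Function.update_of_ne ho]
                        exact R'.step_le hsm o
                    · rw [hz2' l h2, hz2' (l+1) (by omega)]
                      have he : s + (l+1) - 1 = (s + l - 1) + 1 := by omega
                      rw [he]
                      exact R'.step_le (by omega) o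
                  · intro l hl
                    rcases Nat.lt_or_ge l 1 with h0 | h1
                    · interval_cases l
                      rw [hz0, hz1', hdz1]
                      simpa using hjα
                    rcases Nat.lt_or_ge l 2 with h1' | h2
                    · have : l = 1 := by omega
                      subst this
                      rw [hz1', hz2' 2 le_rfl]
                      have he : s + 2 - 1 = s + 1 := by omega
                      rw [he]
                      intro o ho
                      rw [mem_diffSet] at ho
                      have hoj : o ≠ j := by
                        intro h; subst h
                        rw [hz1, Function.update_self] at ho
                        exact ho rfl
                      have hoα : o ∈ α (R'.x s) := by
                        rw [← R'.diff_step hsm, mem_diffSet]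
                        rw [hz1, Function.update_of_ne hoj] at ho
                        exact ho
                      exact hαz1 o hoα hoj
                    · rw [hz2' l h2, hz2' (l+1) (by omega)]
                      have he : s + (l+1) - 1 = (s + l - 1) + 1 := by omega
                      rw [he]
                      rw [R'.diff_step (show s + l - 1 < R'.m by omega)]
              -- apply backward consistency
              set v : N → O := Function.update (R'.x s) i (y i) with hv
              have hdv : diffSet (R'.x s) v = {i} := diffSet_update (Ne.symm hyi)
              have hjv : j ∈ α v := by
                refine hbc j (R'.x s) y₀ (R'.hC s hsm) (notC_of_mem_alpha hlca hy₀i) hIC v ?_ ?_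
                · rw [hdv]; simpa using hy₀i
                · rw [hdv]; simpa using hj
              have hsand : ∀ o, (p o).le (y o) (v o) ∧ (p o).le (v o) (R.x 0 o) := by
                intro o
                refine ⟨?_, R.top_le o _⟩
                by_cases ho : o = i
                · subst ho; rw [hv, Function.update_self]; exact ple_refl _ _
                · rw [hv, Function.update_of_ne ho]
                  exact IH (le_of_lt hsm) o ho
              refine P2 hlca hfc hbc R R.m 0 (by omega) (Nat.zero_le _) v hsand j hjv ?_
              rw [hv, Function.update_of_ne hj]
              exact hcross
          · -- i never compromises from s on: R'.x s is in the sandwich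
            push_neg at hex
            have hconst : ∀ r, s ≤ r → r ≤ R'.m → R'.x r i = R'.x s i := by
              intro r hr1 hr2
              induction r with
              | zero => cases Nat.le_zero.mp hr1; rfl
              | succ n ihr =>
                rcases Nat.lt_or_ge s (n+1) with hh | hh
                · have hn1 : s ≤ n := Nat.lt_succ_iff.mp hh
                  have hnm : n < R'.m := Nat.lt_of_succ_le hr2
                  rw [R'.step_eq hnm (hex n hn1 hnm), ihr hn1 (le_of_lt hnm)]
                · cases le_antisymm hr1 hh; rfl
            have hyi' : R'.x s i = y' i := (hconst R'.m (le_of_lt hsm) le_rfl).symm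
            have hsand : ∀ o, (p o).le (y o) (R'.x s o) ∧ (p o).le (R'.x s o) (R.x 0 o) := by
              intro o
              refine ⟨?_, R.top_le o _⟩
              by_cases ho : o = i
              · subst ho; rw [hyi']; exact hyle
              · exact IH (le_of_lt hsm) o ho
            exact P2 hlca hfc hbc R R.m 0 (by omega) (Nat.zero_le _) (R'.x s) hsand j hjα hcross
        · -- normal step: j stays weakly above y j
          have hlt : (p' j).lt (y j) (R'.x s j) := by
            rw [hdiff j hj]
            exact plt_of_le_ne _ (IHs j hj) (fun h => hcross h.symm)
          have := R'.step_pred hsm hjα hlt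
          rwa [hdiff j hj] at this
      · rw [R'.step_eq hsm hjα]
        exact IHs j hj
  -- conclude with P3
  have hfin : ∀ o, (p o).le (y o) (y' o) ∧ (p o).le (y' o) (R.x 0 o) := by
    intro o
    refine ⟨?_, R.top_le o _⟩
    by_cases ho : o = i
    · subst ho; exact hyle
    · exact INV R'.m le_rfl o ho
  exact P3 hlca hfc hbc R R.m 0 (by omega) (Nat.zero_le _) y' hfin R'.hmem

end
end LPA
namespace LPA
open Classical
set_option linter.unusedSectionVars false
set_option maxHeartbeats 1000000
noncomputable section
variable {N O : Type} [Fintype N] [Fintype O] [Nonempty O] {C : Set (N → O)}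
  {α : (N → O) → Set N}

/-! ### Promoting an object to the top of a preference -/

def prank (pi : LinearOrder O) (c : O) : O → ℕ :=
  fun a => if a = c then Fintype.card O else (LCfin pi a).card

lemma LCfin_card_lt (pi : LinearOrder O) (a : O) : (LCfin pi a).card < Fintype.card O := by
  apply Finset.card_lt_card
  constructor
  · exact Finset.subset_univ _
  · intro hsub
    have : a ∈ LCfin pi a := hsub (Finset.mem_univ a)
    simp only [LCfin, Finset.mem_filter] at this
    exact plt_irrefl _ _ this.2

lemma LCfin_card_mono (pi : LinearOrder O) {a b : O} (h : pi.lt a b) :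
    (LCfin pi a).card < (LCfin pi b).card := by
  apply Finset.card_lt_card
  constructor
  · intro o ho
    simp only [LCfin, Finset.mem_filter] at ho ⊢
    exact ⟨Finset.mem_univ o, plt_of_lt_of_le _ ho.2 (ple_of_lt _ h)⟩
  · intro hsub
    have : a ∈ LCfin pi b := by simp [LCfin, h]
    have := hsub this
    simp only [LCfin, Finset.mem_filter] at this
    exact plt_irrefl _ _ this.2

lemma LCfin_card_lt_iff (pi : LinearOrder O) {a b : O} :
    (LCfin pi a).card < (LCfin pi b).card ↔ pi.lt a b := by
  constructor
  · intro h
    by_contra hab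
    have hle := ple_of_not_lt pi hab
    rcases Classical.em (a = b) with rfl | hne
    · omega
    · have := LCfin_card_mono pi (plt_of_le_ne _ hle (fun he => hne he.symm))
      omega
  · exact LCfin_card_mono pi

lemma prank_inj (pi : LinearOrder O) (c : O) : Function.Injective (prank pi c) := by
  intro a b hab
  by_cases ha : a = c <;> by_cases hb : b = c
  · rw [ha, hb]
  · exfalso
    rw [prank, prank, if_pos ha, if_neg hb] at hab
    have := LCfin_card_lt pi b
    omega
  · exfalso
    rw [prank, prank, if_neg ha, if_pos hb] at hab
    have := LCfin_card_lt pi a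
    omega
  · rw [prank, prank, if_neg ha, if_neg hb] at hab
    by_contra hne
    rcases ple_total pi a b with h | h
    · have := LCfin_card_mono pi (plt_of_le_ne _ h hne)
      omega
    · have := LCfin_card_mono pi (plt_of_le_ne _ h (fun he => hne he.symm))
      omega

def promote (c : O) (pi : LinearOrder O) : LinearOrder O :=
  LinearOrder.lift' (prank pi c) (prank_inj pi c)

lemma promote_lt_iff (c : O) (pi : LinearOrder O) (a b : O) :
    (promote c pi).lt a b ↔ prank pi c a < prank pi c b := Iff.rfl

lemma promote_top {c : O} {pi : LinearOrder O} {b : O} (h : b ≠ c) :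
    (promote c pi).lt b c := by
  rw [promote_lt_iff, prank, prank, if_neg h, if_pos rfl]
  exact LCfin_card_lt pi b

lemma promote_keep {c : O} {pi : LinearOrder O} {a b : O} (ha : a ≠ c) (hb : b ≠ c) :
    (promote c pi).lt a b ↔ pi.lt a b := by
  rw [promote_lt_iff, prank, prank, if_neg ha, if_neg hb]
  exact LCfin_card_lt_iff pi

/-! ### Maskin monotonicity of `LP_α` -/

lemma maskin (hlca : IsLCA C α) (hfc : ForwardCons α) (hbc : BackCons C α)
    (himp : lpImplementable C α) : MaskinMono (LPmech (N := N) C α) := by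
  classical
  intro p p' hprem
  have key : ∀ s : Finset N, LPmech C α (fun j => if j ∈ s then p' j else p j) = LPmech C α p := by
    intro s
    induction s using Finset.induction_on with
    | empty =>
      have he : (fun j => if j ∈ (∅ : Finset N) then p' j else p j) = p := by
        funext j; simp
      rw [he]
    | @insert a s ha ih =>
      set q : N → LinearOrder O := fun j => if j ∈ s then p' j else p j with hq
      set q' : N → LinearOrder O := fun j => if j ∈ insert a s then p' j else p j with hq'
      have hdiff : ∀ j, j ≠ a → q' j = q j := by
        intro j hj
        simp [hq, hq', Finset.mem_insert, hj]
      have hqa : q a = p a := by simp [hq, ha]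
      have hq'a : q' a = p' a := by simp [hq']
      by_cases heq : LPmech C α q' a = LPmech C α q a
      · rw [target hlca hfc hbc himp q q' a hdiff (by rw [hqa]; exact Or.inl heq), ih]
      · rcases ple_total (p a) (LPmech C α q' a) (LPmech C α q a) with h | h
        · have hlt' : (p a).lt (LPmech C α q' a) (LPmech C α q a) := plt_of_le_ne _ h heq
          have h1 : (p a).lt (LPmech C α q' a) (LPmech C α p a) := by rw [← ih]; exact hlt'
          have h2 := hprem a _ h1
          have h3 : (p' a).lt (LPmech C α q' a) (LPmech C α q a) := by rw [ih]; exact h2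
          have hre := target hlca hfc hbc himp q' q a (fun j hj => (hdiff j hj).symm)
            (by rw [hq'a]; exact Or.inr h3)
          rw [← hre]
          exact ih
        · rw [target hlca hfc hbc himp q q' a hdiff
            (by rw [hqa]; exact Or.inr (plt_of_le_ne _ h (fun he => heq he.symm))), ih]
  have huniv := key Finset.univ
  have he : (fun j => if j ∈ (Finset.univ : Finset N) then p' j else p j) = p' := by
    funext j; simp
  rwa [he] at huniv

end
end LPA
/-- Theorem 1: if `α` is an implementable and consistent (forward and
backward consistent) local compromiser assignment for `C`, then `LP_α` is group
strategy-proof. -/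
theorem consistent_implies_gsp
    {N O : Type} [Fintype N] [Fintype O] [Nonempty O]
    (C : Set (N → O)) (hC : C.Nonempty)
    (α : (N → O) → Set N) (hlca : IsLCA C α)
    (himp : lpImplementable C α)
    (hfc : ForwardCons α) (hbc : BackCons C α) :
    GSP (LPmech C α) := by
  classical
  intro p p' M hM hagree
  rintro ⟨hall, k₀, hk₀M, hk₀⟩
  set y : N → O := LPmech C α p with hy
  set y' : N → O := LPmech C α p' with hy'
  set p'' : N → LinearOrder O :=
    fun j => if j ∈ M then LPA.promote (y' j) (p j) else p j with hp''
  have hmm := LPA.maskin (C := C) (α := α) hlca hfc hbc himp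
  -- first application : from p' to p''
  have h1 : LPmech C α p'' = y' := by
    apply hmm p' p''
    intro i b hb
    rw [← hy'] at hb ⊢
    by_cases hiM : i ∈ M
    · have hbne : b ≠ y' i := fun he => LPA.plt_irrefl _ _ (he ▸ hb)
      have : p'' i = LPA.promote (y' i) (p i) := by simp [hp'', hiM]
      rw [this]
      exact LPA.promote_top hbne
    · have : p'' i = p' i := by simp [hp'', hiM, hagree i hiM]
      rw [this]
      exact hb
  -- second application : from p to p''
  have h2 : LPmech C α p'' = y := by
    apply hmm p p''
    intro i b hb
    rw [← hy] at hb ⊢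
    by_cases hiM : i ∈ M
    · have hwi := hall i hiM
      have hbne : b ≠ y' i := by
        intro he
        subst he
        rcases hwi with he' | hlt
        · rw [he'] at hb; exact LPA.plt_irrefl _ _ hb
        · exact LPA.plt_irrefl _ _ (LPA.plt_of_lt_of_le _ hlt (LPA.ple_of_lt _ hb))
      have hpi : p'' i = LPA.promote (y' i) (p i) := by simp [hp'', hiM]
      rw [hpi]
      by_cases hyy : y i = y' i
      · rw [hyy]
        exact LPA.promote_top hbne
      · rw [LPA.promote_keep hbne hyy]
        exact hb
    · have : p'' i = p i := by simp [hp'', hiM]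
      rw [this]
      exact hb
  have : y' = y := by rw [← h1, h2]
  rw [this] at hk₀
  exact LPA.plt_irrefl _ _ hk₀
end

section
/- Let f be a group strategy-proof local priority mechanism for a constraint C, and let α be the pointwise union of all implementable local compromiser assignments that induce f. Then for every infeasible allocation x and every allocation y with ∅ ≠ d(x,y) ⊊ α(x), the allocation y is infeasible and α(y) ⊇ α(x) \ d(x,y); in particular, α satisfies forward consistency. -/
/- Common framework: constrained allocation, local priority mechanisms
   (Root & Ahn, "Local Priority Mechanisms"). Agents `N`, objects `O`.
   A strict preference is encoded as a `LinearOrder` on `O`, where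
   `pi.lt b a` means `a` is strictly preferred to `b`. -/

open Classical

/- ===== Auxiliary development ===== -/
noncomputable section AuxDev
open Classical

variable {N O : Type}

/-- Move `c` to the top of `pi`, keeping the rest of the order. -/
def moveTopLO (pi : LinearOrder O) (c : O) : LinearOrder O :=
  letI := pi
  LinearOrder.lift' (fun a => toLex ((if a = c then (1:ℕ) else 0), a))
    (fun _ _ h => congrArg Prod.snd (congrArg ofLex h))

lemma moveTopLO_lt_of_ne (pi : LinearOrder O) (c a : O) (h : a ≠ c) :
    (moveTopLO pi c).lt a c := by
  letI := pi
  show toLex ((if a = c then (1:ℕ) else 0), a) < toLex ((if c = c then (1:ℕ) else 0), c)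
  rw [Prod.Lex.lt_iff]
  left
  simp [h]

lemma moveTopLO_lt_iff (pi : LinearOrder O) (c a b : O) (ha : a ≠ c) (hb : b ≠ c) :
    (moveTopLO pi c).lt a b ↔ pi.lt a b := by
  letI := pi
  show toLex ((if a = c then (1:ℕ) else 0), a) < toLex ((if b = c then (1:ℕ) else 0), b) ↔ _
  rw [Prod.Lex.lt_iff]
  simp [ha, hb]

variable [Fintype O] [Nonempty O]

lemma le_topObj (pi : LinearOrder O) (a : O) : pi.le a (topObj pi) := by
  letI := pi
  exact Finset.le_max' _ a (Finset.mem_univ a)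

lemma lt_topObj (pi : LinearOrder O) (a : O) (h : a ≠ topObj pi) : pi.lt a (topObj pi) := by
  letI := pi
  exact lt_of_le_of_ne (le_topObj pi a) h

lemma topObj_eq (pi : LinearOrder O) (c : O) (h : ∀ a, pi.le a c) : topObj pi = c := by
  letI := pi
  exact le_antisymm (Finset.max'_le _ _ _ fun a _ => h a) (le_topObj pi c)

lemma topObj_moveTopLO (pi : LinearOrder O) (c : O) : topObj (moveTopLO pi c) = c := by
  apply topObj_eq
  intro a
  by_cases h : a = c
  · exact h ▸ (moveTopLO pi c).le_refl a
  · exact ((moveTopLO pi c).lt_iff_le_not_ge _ _).1 (moveTopLO_lt_of_ne pi c a h) |>.1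

lemma mem_LCfin (pi : LinearOrder O) (a b : O) : b ∈ LCfin pi a ↔ pi.lt b a := by
  letI := pi
  simp [LCfin]

lemma bestLC_lt (pi : LinearOrder O) (a : O) (h : (LCfin pi a).Nonempty) :
    pi.lt (bestLC pi a) a := by
  letI := pi
  rw [bestLC, dif_pos h]
  exact (mem_LCfin pi a _).1 (Finset.max'_mem _ h)

lemma le_bestLC (pi : LinearOrder O) (a b : O) (hb : pi.lt b a) : pi.le b (bestLC pi a) := by
  letI := pi
  have hne : (LCfin pi a).Nonempty := ⟨b, (mem_LCfin pi a b).2 hb⟩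
  rw [bestLC, dif_pos hne]
  exact Finset.le_max' _ b ((mem_LCfin pi a b).2 hb)

lemma card_bestLC (pi : LinearOrder O) (a : O) (h : (LCfin pi a).Nonempty) :
    (LCfin pi (bestLC pi a)).card < (LCfin pi a).card := by
  letI := pi
  have hlt : pi.lt (bestLC pi a) a := bestLC_lt pi a h
  apply Finset.card_lt_card
  have hsub : LCfin pi (bestLC pi a) ⊆ LCfin pi a := by
    intro c hc
    exact (mem_LCfin pi a c).2 (lt_trans ((mem_LCfin pi _ c).1 hc) hlt)
  refine (Finset.ssubset_iff_of_subset hsub).2 ⟨bestLC pi a, (mem_LCfin pi a _).2 hlt, ?_⟩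
  intro hmem
  exact lt_irrefl _ ((mem_LCfin pi _ _).1 hmem)

/- ===== Consequences of GSP ===== -/

lemma gsp_sp (f : (N → LinearOrder O) → N → O) (hgsp : GSP f) : StratProof f := by
  intro p p' i hoff hs
  refine hgsp p p' {i} ⟨i, rfl⟩ (fun j hj => hoff j hj) ⟨?_, ⟨i, rfl, hs⟩⟩
  intro j hj
  cases hj
  exact Or.inr hs

lemma gsp_nonbossy (f : (N → LinearOrder O) → N → O) (hgsp : GSP f) : Nonbossy f := by
  intro p p' i hoff hsame
  by_contra hne
  have : ∃ k, f p' k ≠ f p k := by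
    by_contra h
    push_neg at h
    exact hne (funext h)
  obtain ⟨k, hk⟩ := this
  have hki : k ≠ i := fun h => hk (h ▸ hsame)
  have hpk : p' k = p k := hoff k hki
  letI := p k
  rcases lt_trichotomy (f p' k) (f p k) with hlt | heq | hgt
  · -- true profile p', deviate to p
    refine hgsp p' p {i, k} ⟨i, Or.inl rfl⟩ (fun j hj => (hoff j (fun h => hj (Or.inl h))).symm)
      ⟨?_, ⟨k, Or.inr rfl, ?_⟩⟩
    · intro j hj
      rcases hj with hj | hj
      · subst hj; exact Or.inl hsame.symm
      · subst hj
        right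
        show (p' j).lt (f p' j) (f p j)
        rw [hpk]
        exact hlt
    · show (p' k).lt (f p' k) (f p k)
      rw [hpk]
      exact hlt
  · exact hk heq
  · -- true profile p, deviate to p'
    refine hgsp p p' {i, k} ⟨i, Or.inl rfl⟩ (fun j hj => hoff j (fun h => hj (Or.inl h)))
      ⟨?_, ⟨k, Or.inr rfl, hgt⟩⟩
    intro j hj
    rcases hj with hj | hj
    · subst hj; exact Or.inl hsame
    · subst hj; exact Or.inr hgt

lemma gsp_mstep (f : (N → LinearOrder O) → N → O) (hgsp : GSP f)
    (p q : N → LinearOrder O) (i : N) (hoff : ∀ j, j ≠ i → q j = p j)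
    (hlc : ∀ b, (p i).lt b (f p i) → (q i).lt b (f p i)) : f q = f p := by
  have h1 : ¬ sPref (p i) (f q i) (f p i) := gsp_sp f hgsp p q i hoff
  have h2 : ¬ sPref (q i) (f p i) (f q i) :=
    gsp_sp f hgsp q p i (fun j hj => (hoff j hj).symm)
  letI := p i
  rcases lt_trichotomy (f q i) (f p i) with hlt | heq | hgt
  · exact absurd (hlc _ hlt) h2
  · exact gsp_nonbossy f hgsp p q i hoff heq
  · exact absurd hgt h1

lemma gsp_mono [Fintype N] (f : (N → LinearOrder O) → N → O) (hgsp : GSP f) :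
    MaskinMono f := by
  intro p p' h
  classical
  suffices H : ∀ S : Finset N, f (fun j => if j ∈ S then p' j else p j) = f p by
    have := H Finset.univ
    simpa using this
  intro S
  induction S using Finset.induction_on with
  | empty => simp
  | @insert a S ha ih =>
    have hstep := gsp_mstep f hgsp (fun j => if j ∈ S then p' j else p j)
      (fun j => if j ∈ insert a S then p' j else p j) a ?_ ?_
    · rw [hstep, ih]
    · intro j hj
      by_cases hjS : j ∈ S
      · simp [hjS, Finset.mem_insert]
      · simp [hjS, Finset.mem_insert, hj]
    · intro b hb
      have hfa : f (fun j => if j ∈ S then p' j else p j) a = f p a := congrFun ih a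
      beta_reduce at hb ⊢
      rw [if_neg ha, hfa] at hb
      rw [if_pos (Finset.mem_insert_self a S), hfa]
      exact h a b hb

/- ===== Facts about induced mechanisms ===== -/

lemma induces_unanimity {C : Set (N → O)} {β : (N → O) → Set N}
    {f : (N → LinearOrder O) → N → O} (hβ : lpInduces C β f)
    (q : N → LinearOrder O) (h : tau1 q ∈ C) : f q = tau1 q := by
  obtain ⟨m, w, hw0, hsteps, hwm, _⟩ := hβ.2 q
  cases m with
  | zero => rw [← hwm, hw0]
  | succ m =>
    exact absurd (hw0 ▸ h) (hsteps 0 (Nat.succ_pos m)).1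

lemma induces_strict {C : Set (N → O)} {β : (N → O) → Set N}
    {f : (N → LinearOrder O) → N → O} (hβ : lpInduces C β f)
    (q : N → LinearOrder O) (z : N → O) (k : N)
    (htop : tau1 q = z) (hzC : z ∉ C) (hk : k ∈ β z) : (q k).lt (f q k) (z k) := by
  obtain ⟨m, w, hw0, hsteps, hwm, hfC⟩ := hβ.2 q
  letI := q k
  have hw0' : w 0 = z := hw0.trans htop
  have hm : m ≠ 0 := by
    intro h
    subst h
    rw [hwm] at hw0'
    exact hzC (hw0' ▸ hfC)
  obtain ⟨h0C, h0nf, h0st⟩ := hsteps 0 (Nat.pos_of_ne_zero hm)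
  have hk0 : k ∈ β (w 0) := hw0' ▸ hk
  have hw1 : w 1 k = bestLC (q k) (w 0 k) := by
    rw [h0st, lpStep, if_pos hk0]
  have hlt1 : (q k).lt (w 1 k) (w 0 k) := by
    rw [hw1]
    exact bestLC_lt (q k) (w 0 k) (h0nf k hk0)
  have hmono : ∀ t, 1 ≤ t → t ≤ m → (q k).le (w t k) (w 1 k) := by
    intro t
    induction t with
    | zero => intro h; omega
    | succ t ih =>
      intro _ hle
      rcases Nat.lt_or_ge 0 t with ht | ht
      · have hstep := hsteps t (by omega)
        have : (q k).le (w (t+1) k) (w t k) := by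
          rw [hstep.2.2, lpStep]
          by_cases hkt : k ∈ β (w t)
          · rw [if_pos hkt]
            exact le_of_lt (bestLC_lt (q k) (w t k) (hstep.2.1 k hkt))
          · rw [if_neg hkt]
        exact le_trans this (ih (by omega) (by omega))
      · have : t = 0 := by omega
        subst this
        exact le_refl _
  have hfin : (q k).le (w m k) (w 1 k) := hmono m (Nat.one_le_iff_ne_zero.2 hm) le_rfl
  rw [hwm] at hfin
  calc f q k ≤ w 1 k := hfin
    _ < w 0 k := hlt1
    _ = z k := by rw [hw0']

/- ===== The canonical maximal local compromiser assignment ===== -/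

def alphaStar (C : Set (N → O)) (f : (N → LinearOrder O) → N → O) : (N → O) → Set N :=
  fun z => {k | z ∉ C ∧ ∀ q, tau1 q = z → f q k ≠ z k}

lemma union_subset_star (C : Set (N → O)) (f : (N → LinearOrder O) → N → O) (z : N → O) :
    alphaUnionAll C f z ⊆ alphaStar C f z := by
  rintro k ⟨β, hβ, hk⟩
  have hzC : z ∉ C := by
    intro hz
    have : β z = ∅ := (hβ.1 z).2 hz
    rw [this] at hk
    exact hk
  refine ⟨hzC, fun q hq => ?_⟩
  letI := q k
  exact ne_of_lt (induces_strict hβ q z k hq hzC hk)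

lemma star_empty (C : Set (N → O)) (f : (N → LinearOrder O) → N → O) (z : N → O)
    (hz : z ∈ C) : alphaStar C f z = ∅ := by
  ext k
  simp only [alphaStar, Set.mem_setOf_eq, Set.mem_empty_iff_false, iff_false, not_and]
  intro h
  exact absurd hz h

lemma star_nonempty {C : Set (N → O)} {β : (N → O) → Set N}
    {f : (N → LinearOrder O) → N → O} (hβ : lpInduces C β f) (z : N → O)
    (hz : z ∉ C) : (alphaStar C f z).Nonempty := by
  obtain ⟨k, hk⟩ := (hβ.1 z).1 hz
  refine ⟨k, hz, fun q hq => ?_⟩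
  letI := q k
  exact ne_of_lt (induces_strict hβ q z k hq hz hk)

/- Pushing a target allocation to the tops of a profile. -/

lemma tau1_push (p : N → LinearOrder O) (z : N → O) :
    tau1 (fun k => moveTopLO (p k) (z k)) = z :=
  funext fun k => topObj_moveTopLO (p k) (z k)

lemma push_eq [Fintype N] {f : (N → LinearOrder O) → N → O} (hgsp : GSP f)
    (p : N → LinearOrder O) (z : N → O) (hwp : ∀ k, wPref (p k) (z k) (f p k)) :
    f (fun k => moveTopLO (p k) (z k)) = f p := by
  apply gsp_mono f hgsp
  intro k b hb
  rcases hwp k with he | hlt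
  · -- z k = f p k is the top
    letI := p k
    have hbne : b ≠ z k := fun h => absurd hb (h ▸ he ▸ lt_irrefl (z k))
    rw [← he]
    exact moveTopLO_lt_of_ne (p k) (z k) b hbne
  · -- f p k strictly below z k
    letI := p k
    have h1 : f p k ≠ z k := ne_of_lt hlt
    have h2 : b ≠ z k := fun h => absurd (lt_trans hb hlt) (h ▸ lt_irrefl (z k))
    exact (moveTopLO_lt_iff (p k) (z k) b (f p k) h2 h1).2 hb

lemma star_strict [Fintype N] {C : Set (N → O)} {f : (N → LinearOrder O) → N → O}
    (hgsp : GSP f) (p : N → LinearOrder O) (z : N → O) (k : N)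
    (hwp : ∀ k, wPref (p k) (z k) (f p k)) (hk : k ∈ alphaStar C f z) :
    (p k).lt (f p k) (z k) := by
  have h1 := hk.2 (fun k => moveTopLO (p k) (z k)) (tau1_push p z)
  rw [push_eq hgsp p z hwp] at h1
  rcases hwp k with he | hlt
  · exact absurd he.symm h1
  · exact hlt

/- ===== `alphaStar` induces `f` ===== -/

lemma star_induces [Fintype N] {C : Set (N → O)} {β : (N → O) → Set N}
    {f : (N → LinearOrder O) → N → O} (hf : ∀ p, f p ∈ C) (hgsp : GSP f)
    (hβ : lpInduces C β f) : lpInduces C (alphaStar C f) f := by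
  classical
  constructor
  · exact fun z => ⟨fun h => star_nonempty hβ z h, fun h => star_empty C f z h⟩
  intro p
  set A := alphaStar C f with hA
  let X : ℕ → N → O := fun t =>
    Nat.rec (tau1 p) (fun _ x => if x ∈ C then x else lpStep A p x) t
  have hX0 : X 0 = tau1 p := rfl
  have hXs : ∀ t, X (t+1) = if X t ∈ C then X t else lpStep A p (X t) := fun t => rfl
  have hinv : ∀ t k, wPref (p k) (X t k) (f p k) := by
    intro t
    induction t with
    | zero =>
      intro k
      rcases Classical.em (f p k = X 0 k) with h | h
      · exact Or.inl h.symm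
      · exact Or.inr (lt_topObj (p k) (f p k) h)
    | succ t ih =>
      intro k
      rw [hXs t]
      by_cases hC : X t ∈ C
      · rw [if_pos hC]; exact ih k
      · rw [if_neg hC, lpStep]
        by_cases hk : k ∈ A (X t)
        · rw [if_pos hk]
          have hstrict : (p k).lt (f p k) (X t k) := star_strict hgsp p (X t) k ih hk
          have hle : (p k).le (f p k) (bestLC (p k) (X t k)) :=
            le_bestLC (p k) (X t k) (f p k) hstrict
          letI := p k
          rcases eq_or_lt_of_le hle with he | hlt
          · exact Or.inl he.symm
          · exact Or.inr hlt
        · rw [if_neg hk]; exact ih k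
  have hstrict : ∀ t, X t ∉ C → ∀ k ∈ A (X t), (p k).lt (f p k) (X t k) :=
    fun t _ k hk => star_strict hgsp p (X t) k (hinv t) hk
  have hnf : ∀ t, X t ∉ C → lpNoFail A p (X t) := by
    intro t ht k hk
    exact ⟨f p k, (mem_LCfin (p k) (X t k) (f p k)).2 (hstrict t ht k hk)⟩
  have hdec : ∀ t, X t ∉ C →
      (∑ k : N, (LCfin (p k) (X (t+1) k)).card) < ∑ k : N, (LCfin (p k) (X t k)).card := by
    intro t ht
    apply Finset.sum_lt_sum
    · intro k _
      rw [hXs t, if_neg ht, lpStep]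
      by_cases hk : k ∈ A (X t)
      · rw [if_pos hk]
        exact (card_bestLC (p k) (X t k) (hnf t ht k hk)).le
      · rw [if_neg hk]
    · obtain ⟨k, hk⟩ := star_nonempty hβ (X t) ht
      refine ⟨k, Finset.mem_univ k, ?_⟩
      rw [hXs t, if_neg ht, lpStep, if_pos hk]
      exact card_bestLC (p k) (X t k) (hnf t ht k hk)
  have hterm : ∃ m, X m ∈ C := by
    by_contra hcon
    push_neg at hcon
    have key : ∀ n, (∑ k : N, (LCfin (p k) (X n k)).card) + n
        ≤ ∑ k : N, (LCfin (p k) (X 0 k)).card := by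
      intro n
      induction n with
      | zero => omega
      | succ n ih =>
        have := hdec n (hcon n)
        omega
    have := key ((∑ k : N, (LCfin (p k) (X 0 k)).card) + 1)
    omega
  let m := Nat.find hterm
  have hmC : X m ∈ C := Nat.find_spec hterm
  refine ⟨m, X, hX0, ?_, ?_, hf p⟩
  · intro t ht
    have hXt : X t ∉ C := Nat.find_min hterm ht
    exact ⟨hXt, hnf t hXt, by rw [hXs t, if_neg hXt]⟩
  · have h1 : f (fun k => moveTopLO (p k) (X m k)) = f p := push_eq hgsp p (X m) (hinv m)
    have h2 : f (fun k => moveTopLO (p k) (X m k)) = tau1 (fun k => moveTopLO (p k) (X m k)) :=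
      induces_unanimity hβ _ (by rw [tau1_push]; exact hmC)
    rw [tau1_push] at h2
    rw [← h2, h1]

/- ===== The key GSP manipulation lemma ===== -/

lemma star_keyB [Fintype N] {C : Set (N → O)} {f : (N → LinearOrder O) → N → O}
    (hgsp : GSP f) (x y : N → O) (i : N)
    (hd : diffSet x y ⊆ alphaStar C f x) (hi : i ∈ alphaStar C f x)
    (hid : i ∉ diffSet x y) (q : N → LinearOrder O) (hq : tau1 q = y) :
    f q i ≠ y i := by
  classical
  intro hcon
  have hyi : x i = y i := not_not.1 hid
  let P : N → LinearOrder O := fun k =>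
    if k ∈ diffSet x y then moveTopLO (moveTopLO (q k) (f q k)) (x k) else q k
  have hPoff : ∀ k, k ∉ diffSet x y → P k = q k := fun k h => if_neg h
  have hPd : ∀ k, k ∈ diffSet x y → P k = moveTopLO (moveTopLO (q k) (f q k)) (x k) :=
    fun k h => if_pos h
  have htopP : tau1 P = x := by
    funext k
    by_cases h : k ∈ diffSet x y
    · show topObj (P k) = x k
      rw [hPd k h]
      exact topObj_moveTopLO _ _
    · show topObj (P k) = x k
      rw [hPoff k h]
      have h1 : topObj (q k) = y k := congrFun hq k
      have h2 : x k = y k := not_not.1 h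
      rw [h1, h2]
  have hne : ∀ k ∈ alphaStar C f x, f P k ≠ x k := fun k hk => hk.2 P htopP
  have hstricti : sPref (P i) (f q i) (f P i) := by
    show (P i).lt (f P i) (f q i)
    have h1 : f P i ≠ x i := hne i hi
    have h2 : x i = topObj (P i) := (congrFun htopP i).symm
    rw [hcon, ← hyi, h2]
    exact lt_topObj (P i) (f P i) (fun h => h1 (h.trans h2.symm))
  refine hgsp P q (diffSet x y ∪ {i}) ⟨i, Or.inr rfl⟩
    (fun j hj => (hPoff j (fun h => hj (Or.inl h))).symm) ⟨?_, ⟨i, Or.inr rfl, hstricti⟩⟩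
  intro j hj
  rcases hj with hjd | hji
  · -- j ∈ diffSet x y
    have hfPj : f P j ≠ x j := hne j (hd hjd)
    by_cases hqx : f q j = x j
    · right
      show (P j).lt (f P j) (f q j)
      have h2 : x j = topObj (P j) := (congrFun htopP j).symm
      rw [hqx, h2]
      exact lt_topObj (P j) (f P j) (fun h => hfPj (h.trans h2.symm))
    · by_cases he : f q j = f P j
      · exact Or.inl he
      · right
        show (P j).lt (f P j) (f q j)
        rw [hPd j hjd]
        refine (moveTopLO_lt_iff _ (x j) _ _ hfPj hqx).2 ?_
        exact moveTopLO_lt_of_ne (q j) (f q j) (f P j) (fun h => he h.symm)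
  · -- j = i
    have hji' : j = i := hji
    subst hji'
    exact Or.inr hstricti

/-- A default linear order on `O`. -/
def defaultLO : LinearOrder O :=
  LinearOrder.lift' (Fintype.equivFin O) (Fintype.equivFin O).injective

lemma star_key [Fintype N] {C : Set (N → O)} {β : (N → O) → Set N}
    {f : (N → LinearOrder O) → N → O} (hgsp : GSP f) (hβ : lpInduces C β f)
    (x y : N → O) (i : N)
    (hd : diffSet x y ⊆ alphaStar C f x) (hi : i ∈ alphaStar C f x)
    (hid : i ∉ diffSet x y) : y ∉ C ∧ i ∈ alphaStar C f y := by
  have hyC : y ∉ C := by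
    intro hyC
    let q : N → LinearOrder O := fun k => moveTopLO (defaultLO) (y k)
    have hq : tau1 q = y := tau1_push _ y
    have hfq : f q = y := (induces_unanimity hβ q (hq ▸ hyC)).trans hq
    exact star_keyB hgsp x y i hd hi hid q hq (congrFun hfq i)
  exact ⟨hyC, hyC, fun q hq => star_keyB hgsp x y i hd hi hid q hq⟩

end AuxDev
/-- necessity of forward consistency.  Let `f` be a group
strategy-proof local priority mechanism and `α` the pointwise union of all
implementable local compromiser assignments inducing `f`.  Then for every infeasible
`x` and every `y` with `∅ ≠ d(x,y) ⊊ α(x)`, `y` is infeasible and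
`α(y) ⊇ α(x) \ d(x,y)`; in particular `α` is forward consistent. -/
theorem union_lca_forwardCons
    {N O : Type} [Fintype N] [Fintype O] [Nonempty O]
    (C : Set (N → O)) (hC : C.Nonempty)
    (f : (N → LinearOrder O) → N → O) (hf : ∀ p, f p ∈ C)
    (hgsp : GSP f) (hlpm : ∃ α, lpInduces C α f) :
    (∀ x, x ∉ C → ∀ y : N → O, (diffSet x y).Nonempty →
      diffSet x y ⊂ alphaUnionAll C f x →
      y ∉ C ∧ alphaUnionAll C f x \ diffSet x y ⊆ alphaUnionAll C f y) ∧
    ForwardCons (alphaUnionAll C f) := by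
  obtain ⟨β, hβ⟩ := hlpm
  have heq : alphaUnionAll C f = alphaStar C f := by
    funext z
    apply Set.Subset.antisymm (union_subset_star C f z)
    intro k hk
    exact ⟨alphaStar C f, star_induces hf hgsp hβ, hk⟩
  constructor
  · intro x hx y hne hss
    rw [heq] at hss ⊢
    obtain ⟨i, hi, hid⟩ := Set.exists_of_ssubset hss
    refine ⟨(star_key hgsp hβ x y i hss.subset hi hid).1, ?_⟩
    rintro j ⟨hj, hjd⟩
    exact (star_key hgsp hβ x y j hss.subset hj hjd).2
  · intro x y hdsub
    rw [heq] at hdsub ⊢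
    rintro j ⟨hj, hjd⟩
    exact (star_key hgsp hβ x y j hdsub hj hjd).2
end

section
/- For any mechanism f : 𝒫 → A mapping preference profiles to allocations, the following are equivalent: (1) f is group strategy-proof; (2) f is strategy-proof and nonbossy; (3) f is Maskin monotonic. -/
/- Common framework: constrained allocation, local priority mechanisms
   (Root & Ahn, "Local Priority Mechanisms"). Agents `N`, objects `O`.
   A strict preference is encoded as a `LinearOrder` on `O`, where
   `pi.lt b a` means `a` is strictly preferred to `b`. -/

open Classical

/-- Move `c` to the top of the ranking `pi`. -/
noncomputable def moveTop {O : Type} (pi : LinearOrder O) (c : O) : LinearOrder O :=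
  letI := pi
  LinearOrder.lift' (fun a : O => toLex ((if a = c then true else false), a))
    (fun _ _ h => congrArg (fun x : Lex (Bool × O) => (ofLex x).2) h)

lemma moveTop_lt_iff {O : Type} (pi : LinearOrder O) (c : O) (a b : O) :
    (moveTop pi c).lt a b ↔
      (letI := pi;
        toLex (((if a = c then true else false) : Bool), a) <
          toLex (((if b = c then true else false) : Bool), b)) := by
  letI := pi
  constructor <;> exact fun h => h

lemma moveTop_top {O : Type} (pi : LinearOrder O) (c : O) (b : O) (hb : b ≠ c) :
    (moveTop pi c).lt b c := by
  rw [moveTop_lt_iff]; letI := pi; rw [Prod.Lex.lt_iff]; left; simp [hb]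

lemma moveTop_lt_of_ne {O : Type} (pi : LinearOrder O) (c a b : O) (ha : a ≠ c) (hb : b ≠ c) :
    (moveTop pi c).lt a b ↔ pi.lt a b := by
  rw [moveTop_lt_iff]; letI := pi; rw [Prod.Lex.lt_iff]; simp [ha, hb]

lemma gsp_to_sp_nb {N O : Type} (f : (N → LinearOrder O) → N → O) (h : GSP f) :
    StratProof f ∧ Nonbossy f := by
  constructor
  · intro p p' i hpj hs
    exact h p p' {i} ⟨i, rfl⟩ (fun j hj => hpj j hj)
      ⟨fun j hj => by cases hj; exact Or.inr hs, ⟨i, rfl, hs⟩⟩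
  · intro p p' i hpj hfi
    by_contra hne
    have ⟨j, hj⟩ : ∃ j, f p' j ≠ f p j := by
      by_contra hc; push_neg at hc; exact hne (funext hc)
    have hji : j ≠ i := fun h' => hj (h' ▸ hfi)
    letI := p j
    rcases lt_trichotomy (f p' j) (f p j) with h1 | h1 | h1
    · have hstr : sPref (p' j) (f p j) (f p' j) := by
        show (p' j).lt (f p' j) (f p j); rw [hpj j hji]; exact h1
      refine h p' p {i, j} ⟨i, Or.inl rfl⟩
        (fun k hk => (hpj k (fun h' => hk (h' ▸ Or.inl rfl))).symm)
        ⟨?_, ⟨j, Or.inr rfl, hstr⟩⟩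
      rintro k (rfl | rfl)
      · exact Or.inl hfi.symm
      · exact Or.inr hstr
    · exact hj h1
    · refine h p p' {i, j} ⟨i, Or.inl rfl⟩ ?_ ⟨?_, ⟨j, Or.inr rfl, h1⟩⟩
      · intro k hk; exact hpj k (fun h' => hk (h' ▸ Or.inl rfl))
      · rintro k (rfl | rfl)
        · exact Or.inl hfi
        · exact Or.inr h1

lemma sp_nb_to_mm {N O : Type} [Fintype N] (f : (N → LinearOrder O) → N → O)
    (hsp : StratProof f) (hnb : Nonbossy f) : MaskinMono f := by
  intro p p' hmono
  classical
  set q : Finset N → N → LinearOrder O := fun S j => if j ∈ S then p' j else p j with hq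
  have key : ∀ S : Finset N, f (q S) = f p := by
    intro S
    induction S using Finset.induction_on with
    | empty => simp [hq]
    | @insert i S hiS ih =>
      have hdiff : ∀ j, j ≠ i → q (insert i S) j = q S j := by
        intro j hj; simp [hq, Finset.mem_insert, hj]
      have hqSi : q S i = p i := by simp [hq, hiS]
      have hqIi : q (insert i S) i = p' i := by simp [hq]
      have heq : f (q (insert i S)) i = f (q S) i := by
        have h1 := hsp (q S) (q (insert i S)) i hdiff
        rw [hqSi] at h1
        letI := p i
        rcases lt_trichotomy (f (q (insert i S)) i) (f (q S) i) with h2 | h2 | h2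
        · exfalso
          have h3 : (p i).lt (f (q (insert i S)) i) (f p i) := by rw [← ih]; exact h2
          have h4 := hmono i _ h3
          rw [← ih] at h4
          have h5 := hsp (q (insert i S)) (q S) i (fun j hj => (hdiff j hj).symm)
          rw [hqIi] at h5
          exact h5 h4
        · exact h2
        · exact absurd h2 h1
      have := hnb (q S) (q (insert i S)) i hdiff heq
      rw [this, ih]
  have huniv : q Finset.univ = p' := by funext j; simp [hq]
  rw [← huniv]; exact key Finset.univ

lemma mm_to_gsp {N O : Type} (f : (N → LinearOrder O) → N → O) (hmm : MaskinMono f) :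
    GSP f := by
  rintro p p'' M _ hout ⟨hweak, k, hkM, hks⟩
  classical
  set r : N → LinearOrder O := fun i => if i ∈ M then moveTop (p i) (f p'' i) else p i with hr
  have h1 : f r = f p'' := by
    apply hmm
    intro i b hb
    by_cases hi : i ∈ M
    · have hbne : b ≠ f p'' i := fun h => (by rw [h] at hb; exact (letI := p'' i; lt_irrefl _ hb))
      have hri : r i = moveTop (p i) (f p'' i) := by simp [hr, hi]
      rw [hri]
      exact moveTop_top (p i) (f p'' i) b hbne
    · have hri : r i = p i := by simp [hr, hi]
      rw [hri]; rw [← hout i hi]; exact hb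
  have h2 : f r = f p := by
    apply hmm
    intro i b hb
    by_cases hi : i ∈ M
    · have hri : r i = moveTop (p i) (f p'' i) := by simp [hr, hi]
      rw [hri]
      rcases hweak i hi with heq | hlt
      · rw [← heq]
        exact moveTop_top (p i) (f p'' i) b
          (fun h => by rw [h, heq] at hb; exact (letI := p i; lt_irrefl _ hb))
      · have hne1 : f p i ≠ f p'' i := fun h =>
          (by rw [h] at hlt; exact (letI := p i; lt_irrefl _ hlt))
        have hne2 : b ≠ f p'' i := by
          intro h; subst h
          letI := p i; exact lt_irrefl _ (lt_trans hb hlt)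
        rw [moveTop_lt_of_ne (p i) (f p'' i) b (f p i) hne2 hne1]
        exact hb
    · have hri : r i = p i := by simp [hr, hi]
      rw [hri]; exact hb
  have : f p'' k = f p k := by rw [← h1, h2]
  rw [this] at hks
  letI := p k; exact lt_irrefl _ hks

/-- Proposition A.1, Root & Ahn: for any mechanism, group
strategy-proofness, (individual strategy-proofness + nonbossiness), and Maskin
monotonicity are equivalent. -/
theorem gsp_equivalences
    {N O : Type} [Fintype N] [Fintype O]
    (f : (N → LinearOrder O) → N → O) :
    (GSP f ↔ (StratProof f ∧ Nonbossy f)) ∧ (GSP f ↔ MaskinMono f) := by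
  refine ⟨⟨gsp_to_sp_nb f, fun ⟨hsp, hnb⟩ => mm_to_gsp f (sp_nb_to_mm f hsp hnb)⟩,
    ⟨fun h => sp_nb_to_mm f (gsp_to_sp_nb f h).1 (gsp_to_sp_nb f h).2, mm_to_gsp f⟩⟩
end

section
/- A mechanism f : 𝒫 → A is group strategy-proof if and only if f is strategy-proof and there are no profile ≻, pair of distinct agents i, j, and preferences ≻′_i, ≻′_j such that f_k(≻′_{{i,j}}, ≻_{−{i,j}}) ≿_k f_k(≻) for both k ∈ {i,j} and f_k(≻′_{{i,j}}, ≻_{−{i,j}}) ≻_k f_k(≻) for at least one k ∈ {i,j}. -/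
/- Common framework: constrained allocation, local priority mechanisms
   (Root & Ahn, "Local Priority Mechanisms"). Agents `N`, objects `O`.
   A strict preference is encoded as a `LinearOrder` on `O`, where
   `pi.lt b a` means `a` is strictly preferred to `b`. -/

open Classical

noncomputable section GspAux
variable {N O : Type}

lemma plt_trichot (pi : LinearOrder O) (a b : O) : pi.lt a b ∨ a = b ∨ pi.lt b a := by
  letI := pi; exact lt_trichotomy a b
lemma plt_trans (pi : LinearOrder O) {a b c : O} (h1 : pi.lt a b) (h2 : pi.lt b c) : pi.lt a c := by
  letI := pi; exact lt_trans h1 h2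
lemma plt_irrefl (pi : LinearOrder O) (a : O) : ¬ pi.lt a a := by
  letI := pi; exact lt_irrefl a

def mvTop (pi : LinearOrder O) (a : O) : LinearOrder O :=
  @LinearOrder.lift' O (Lex (Bool × O)) (@Prod.Lex.instLinearOrder Bool O _ pi)
    (fun x => toLex ((if x = a then true else false), x))
    (fun _ _ h => congrArg (fun z => (ofLex z).2) h)

lemma mvTop_top (pi : LinearOrder O) (a : O) {b : O} (hb : b ≠ a) : (mvTop pi a).lt b a := by
  show @LT.lt (Lex (Bool × O)) _ (toLex ((if b = a then true else false), b))
      (toLex ((if a = a then true else false), a))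
  rw [if_neg hb, if_pos rfl, Prod.Lex.lt_iff]
  left; simp

lemma mvTop_lt_iff (pi : LinearOrder O) (a : O) {x y : O} (hx : x ≠ a) (hy : y ≠ a) :
    (mvTop pi a).lt x y ↔ pi.lt x y := by
  show @LT.lt (Lex (Bool × O)) _ (toLex ((if x = a then true else false), x))
      (toLex ((if y = a then true else false), y)) ↔ _
  rw [if_neg hx, if_neg hy, Prod.Lex.lt_iff]
  simp

lemma mono_step (f : (N → LinearOrder O) → N → O) (hSP : StratProof f) (hNB : Nonbossy f)
    (p : N → LinearOrder O) (i : N) (pi' : LinearOrder O)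
    (hmt : ∀ b, (p i).lt b (f p i) → pi'.lt b (f p i)) :
    f (Function.update p i pi') = f p := by
  set q := Function.update p i pi' with hqdef
  have hq : ∀ j, j ≠ i → q j = p j := fun j hj => Function.update_of_ne hj _ _
  have hqi : q i = pi' := Function.update_self _ _ _
  have h1 : ¬ sPref (p i) (f q i) (f p i) := hSP p q i hq
  have h2 : ¬ sPref (q i) (f p i) (f q i) := hSP q p i (fun j hj => (hq j hj).symm)
  have heq : f q i = f p i := by
    rcases plt_trichot (p i) (f q i) (f p i) with h | h | h
    · exfalso; apply h2; rw [hqi]; exact hmt _ h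
    · exact h
    · exact absurd h h1
  exact hNB p q i hq heq

lemma mm_of_sp_nb [Fintype N] (f : (N → LinearOrder O) → N → O)
    (hSP : StratProof f) (hNB : Nonbossy f) : MaskinMono f := by
  classical
  suffices h : ∀ (n : ℕ) (p p' : N → LinearOrder O),
      (Finset.univ.filter fun i => p' i ≠ p i).card ≤ n →
      (∀ (i : N) (b : O), (p i).lt b (f p i) → (p' i).lt b (f p i)) → f p' = f p by
    intro p p' hmt
    exact h (Fintype.card N) p p'
      (le_trans (Finset.card_filter_le _ _) (le_of_eq (Finset.card_univ))) hmt
  intro n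
  induction n with
  | zero =>
    intro p p' hc hmt
    have : ∀ i, p' i = p i := by
      intro i; by_contra hne
      have : i ∈ Finset.univ.filter fun i => p' i ≠ p i := by simpa using hne
      have := Finset.card_pos.mpr ⟨i, this⟩
      omega
    exact congrArg f (funext this)
  | succ n ih =>
    intro p p' hc hmt
    by_cases hpp : ∀ i, p' i = p i
    · exact congrArg f (funext hpp)
    · push_neg at hpp
      obtain ⟨i, hi⟩ := hpp
      have hfq : f (Function.update p i (p' i)) = f p :=
        mono_step f hSP hNB p i (p' i) (fun b => hmt i b)
      have hstep : f p' = f (Function.update p i (p' i)) := by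
        apply ih (Function.update p i (p' i)) p'
        · have hsub : (Finset.univ.filter fun j => p' j ≠ Function.update p i (p' i) j) ⊆
              (Finset.univ.filter fun j => p' j ≠ p j).erase i := by
            intro j hj
            simp only [Finset.mem_filter, Finset.mem_univ, true_and] at hj
            have hji : j ≠ i := by
              intro h; subst h; rw [Function.update_self] at hj; exact hj rfl
            rw [Finset.mem_erase]
            refine ⟨hji, ?_⟩
            simp only [Finset.mem_filter, Finset.mem_univ, true_and]
            rwa [Function.update_of_ne hji] at hj
          have hmem : i ∈ (Finset.univ.filter fun j => p' j ≠ p j) := by simpa using hi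
          have := Finset.card_le_card hsub
          rw [Finset.card_erase_of_mem hmem] at this
          omega
        · intro j b hb
          by_cases hji : j = i
          · subst hji
            rw [hfq] at hb ⊢
            rwa [Function.update_self] at hb
          · rw [hfq] at hb ⊢
            rw [Function.update_of_ne hji] at hb
            exact hmt j b hb
      rw [hstep, hfq]

lemma nb_of_sp_pairs (f : (N → LinearOrder O) → N → O) (hSP : StratProof f)
    (hpair : ¬ ∃ (p p' : N → LinearOrder O) (i j : N), i ≠ j ∧
          (∀ k, k ≠ i → k ≠ j → p' k = p k) ∧
          (∀ k, (k = i ∨ k = j) → wPref (p k) (f p' k) (f p k)) ∧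
          (∃ k, (k = i ∨ k = j) ∧ sPref (p k) (f p' k) (f p k))) :
    Nonbossy f := by
  intro p p' i hdiff heq
  by_contra hne
  have : ∃ l, f p' l ≠ f p l := by
    by_contra h; push_neg at h; exact hne (funext h)
  obtain ⟨l, hl⟩ := this
  have hli : l ≠ i := fun h => hl (h ▸ heq)
  rcases plt_trichot (p l) (f p' l) (f p l) with h | h | h
  ·
    apply hpair
    refine ⟨p', p, i, l, fun h => hli h.symm, ?_, ?_, ?_⟩
    · intro k hk _; exact (hdiff k hk).symm
    · intro m hm
      rcases hm with hm | hm
      · rw [hm]; exact Or.inl heq.symm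
      · rw [hm]; exact Or.inr (by rw [hdiff l hli]; exact h)
    · exact ⟨l, Or.inr rfl, show sPref (p' l) (f p l) (f p' l) by rw [hdiff l hli]; exact h⟩
  · exact hl h
  · apply hpair
    refine ⟨p, p', i, l, fun h => hli h.symm, ?_, ?_, ?_⟩
    · intro k hk _; exact hdiff k hk
    · intro m hm
      rcases hm with hm | hm
      · rw [hm]; exact Or.inl heq
      · rw [hm]; exact Or.inr h
    · exact ⟨l, Or.inr rfl, h⟩

end GspAux

/-- Corollary A.1: a mechanism is group strategy-proof iff it is
individually strategy-proof and there is no profitable joint misreport by any pair of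
agents. -/
theorem gsp_iff_pairs
    {N O : Type} [Fintype N] [Fintype O]
    (f : (N → LinearOrder O) → N → O) :
    GSP f ↔
      (StratProof f ∧
        ¬ ∃ (p p' : N → LinearOrder O) (i j : N), i ≠ j ∧
          (∀ k, k ≠ i → k ≠ j → p' k = p k) ∧
          (∀ k, (k = i ∨ k = j) → wPref (p k) (f p' k) (f p k)) ∧
          (∃ k, (k = i ∨ k = j) ∧ sPref (p k) (f p' k) (f p k))) := by
  constructor
  · intro hGSP
    constructor
    · intro p p' i hdiff hs
      exact hGSP p p' {i} ⟨i, rfl⟩ (fun j hj => hdiff j (by simpa using hj))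
        ⟨fun j hj => by rw [Set.mem_singleton_iff] at hj; subst hj; exact Or.inr hs,
         ⟨i, rfl, hs⟩⟩
    · rintro ⟨p, p', i, j, hij, hoff, hw, k, hk, hs⟩
      apply hGSP p p' {i, j} ⟨i, Or.inl rfl⟩
      · intro l hl
        simp only [Set.mem_insert_iff, Set.mem_singleton_iff] at hl
        push_neg at hl
        exact hoff l hl.1 hl.2
      · refine ⟨fun l hl => hw l (by simpa using hl), k, by simpa using hk, hs⟩
  · rintro ⟨hSP, hpair⟩
    have hNB : Nonbossy f := nb_of_sp_pairs f hSP hpair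
    have hMM : MaskinMono f := mm_of_sp_nb f hSP hNB
    intro p p' M hMne hoff
    rintro ⟨hweak, k, hkM, hstrict⟩
    -- construct s
    set s : N → LinearOrder O := fun j => if j ∈ M then mvTop (p j) (f p' j) else p j with hsdef
    have hs_out : ∀ j, j ∉ M → s j = p j := fun j hj => if_neg hj
    have hs_in : ∀ j, j ∈ M → s j = mvTop (p j) (f p' j) := fun j hj => if_pos hj
    have h1 : f s = f p' := by
      apply hMM p' s
      intro i b hb
      by_cases hiM : i ∈ M
      · rw [hs_in i hiM]
        have hbne : b ≠ f p' i := fun h => by rw [h] at hb; exact plt_irrefl _ _ hb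
        exact mvTop_top (p i) (f p' i) hbne
      · rw [hs_out i hiM, ← hoff i hiM]; exact hb
    have h2 : f s = f p := by
      apply hMM p s
      intro i b hb
      by_cases hiM : i ∈ M
      · rw [hs_in i hiM]
        rcases hweak i hiM with heq | hlt
        · have hbne : b ≠ f p' i := fun h => by rw [h, heq] at hb; exact plt_irrefl _ _ hb
          rw [← heq]
          exact mvTop_top (p i) (f p' i) hbne
        · have hbne : b ≠ f p' i := fun h => by
            rw [h] at hb; exact plt_irrefl _ _ (plt_trans _ hb hlt)
          have hfne : f p i ≠ f p' i := fun h => by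
            rw [← h] at hlt; exact plt_irrefl _ _ hlt
          exact (mvTop_lt_iff (p i) (f p' i) hbne hfne).mpr hb
      · rw [hs_out i hiM]; exact hb
    have : f p' k = f p k := by rw [← h1, h2]
    rw [this] at hstrict
    exact plt_irrefl _ _ hstrict
end

section
/- Let f be a group strategy-proof local priority mechanism for a constraint C and let α be the pointwise union of all implementable local compromiser assignments that induce f. Then for every allocation y and every agent i with i ∉ α(y), there exists a profile ≻ ∈ P^y such that f_i(≻) = y_i. -/
/- Common framework: constrained allocation, local priority mechanisms
   (Root & Ahn, "Local Priority Mechanisms"). Agents `N`, objects `O`.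
   A strict preference is encoded as a `LinearOrder` on `O`, where
   `pi.lt b a` means `a` is strictly preferred to `b`. -/

open Classical

/- ------------------------------------------------------------------ -/
/- Auxiliary material for the proof                                    -/
/- ------------------------------------------------------------------ -/

section Helpers
set_option linter.unusedSectionVars false

variable {N O : Type}

namespace LPAux

/- basic order facts, with the `LinearOrder` given as a term -/

lemma lt_tri (pi : LinearOrder O) (a b : O) : pi.lt a b ∨ a = b ∨ pi.lt b a :=
  @lt_trichotomy O pi a b

lemma lt_trans' (pi : LinearOrder O) {a b c : O} (h1 : pi.lt a b) (h2 : pi.lt b c) :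
    pi.lt a c := @lt_trans O _ a b c h1 h2

lemma lt_irrefl' (pi : LinearOrder O) (a : O) : ¬ pi.lt a a := @lt_irrefl O _ a

lemma lt_asymm' (pi : LinearOrder O) {a b : O} (h : pi.lt a b) : ¬ pi.lt b a :=
  @lt_asymm O _ a b h

lemma le_iff' (pi : LinearOrder O) (a b : O) : pi.le a b ↔ pi.lt a b ∨ a = b :=
  @le_iff_lt_or_eq O _ a b

lemma le_of_lt' (pi : LinearOrder O) {a b : O} (h : pi.lt a b) : pi.le a b :=
  @le_of_lt O _ a b h

lemma lt_of_le_lt' (pi : LinearOrder O) {a b c : O} (h1 : pi.le a b) (h2 : pi.lt b c) :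
    pi.lt a c := @lt_of_le_of_lt O _ a b c h1 h2

lemma lt_of_lt_le' (pi : LinearOrder O) {a b c : O} (h1 : pi.lt a b) (h2 : pi.le b c) :
    pi.lt a c := @lt_of_lt_of_le O _ a b c h1 h2

lemma ne_of_lt' (pi : LinearOrder O) {a b : O} (h : pi.lt a b) : a ≠ b := by
  intro heq; subst heq; exact lt_irrefl' pi a h

lemma wPref_refl (pi : LinearOrder O) (a : O) : wPref pi a a := Or.inl rfl

lemma wPref_trans (pi : LinearOrder O) {a b c : O} (h1 : wPref pi a b) (h2 : wPref pi b c) :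
    wPref pi a c := by
  rcases h1 with rfl | h1
  · exact h2
  · rcases h2 with rfl | h2
    · exact Or.inr h1
    · exact Or.inr (lt_trans' pi h2 h1)

lemma wPref_of_lt (pi : LinearOrder O) {a b : O} (h : pi.lt b a) : wPref pi a b := Or.inr h

lemma lt_of_wPref_ne (pi : LinearOrder O) {a b : O} (h : wPref pi a b) (hne : a ≠ b) :
    pi.lt b a := by
  rcases h with rfl | h
  · exact absurd rfl hne
  · exact h

variable [Fintype O] [Nonempty O]

lemma mem_LCfin (pi : LinearOrder O) (a b : O) : b ∈ LCfin pi a ↔ pi.lt b a := by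
  simp [LCfin]

lemma bestLC_lt (pi : LinearOrder O) {a : O} (h : (LCfin pi a).Nonempty) :
    pi.lt (bestLC pi a) a := by
  rw [bestLC, dif_pos h]
  exact (mem_LCfin pi a _).1 (@Finset.max'_mem O pi _ h)

lemma bestLC_ub (pi : LinearOrder O) {a b : O} (hb : pi.lt b a) :
    pi.le b (bestLC pi a) := by
  have hne : (LCfin pi a).Nonempty := ⟨b, (mem_LCfin pi a b).2 hb⟩
  rw [bestLC, dif_pos hne]
  exact @Finset.le_max' O pi _ b ((mem_LCfin pi a b).2 hb)

lemma bestLC_eq (pi : LinearOrder O) {a c : O} (hc : pi.lt c a)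
    (hub : ∀ b, pi.lt b a → pi.le b c) : bestLC pi a = c := by
  have hne : (LCfin pi a).Nonempty := ⟨c, (mem_LCfin pi a c).2 hc⟩
  exact @le_antisymm O _ _ _ (hub _ (bestLC_lt pi hne)) (bestLC_ub pi hc)

lemma topObj_eq (pi : LinearOrder O) {a : O} (h : ∀ b, pi.le b a) : topObj pi = a := by
  refine @le_antisymm O _ _ _ ?_ ?_
  · exact @Finset.max'_le O pi _ _ a (fun b _ => h b)
  · exact @Finset.le_max' O pi _ a (Finset.mem_univ a)

/- rank of an object and order surgery -/

def rnk (pi : LinearOrder O) (a : O) : ℕ := (LCfin pi a).card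

lemma rnk_lt_rnk (pi : LinearOrder O) {a b : O} (h : pi.lt a b) :
    rnk pi a < rnk pi b := by
  apply Finset.card_lt_card
  constructor
  · intro c hc
    exact (mem_LCfin pi b c).2 (lt_trans' pi ((mem_LCfin pi a c).1 hc) h)
  · intro hsub
    have := (mem_LCfin pi a a).1 (hsub ((mem_LCfin pi b a).2 h))
    exact lt_irrefl' pi a this

lemma lt_iff_rnk (pi : LinearOrder O) (a b : O) : pi.lt a b ↔ rnk pi a < rnk pi b := by
  constructor
  · exact rnk_lt_rnk pi
  · intro h
    rcases lt_tri pi a b with h' | rfl | h'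
    · exact h'
    · omega
    · exact absurd (rnk_lt_rnk pi h') (by omega)

def mkOrder (pi : LinearOrder O) (cls : O → ℕ) : LinearOrder O :=
  LinearOrder.lift' (fun a => toLex ((cls a, rnk pi a) : ℕ × ℕ))
    (by
      intro a b h
      have h1 : cls a = cls b := congrArg (fun z => (ofLex z).1) h
      have h2 : rnk pi a = rnk pi b := congrArg (fun z => (ofLex z).2) h
      rcases lt_tri pi a b with h' | rfl | h'
      · exact absurd (rnk_lt_rnk pi h') (by omega)
      · rfl
      · exact absurd (rnk_lt_rnk pi h') (by omega))

lemma mkOrder_lt (pi : LinearOrder O) (cls : O → ℕ) (a b : O) :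
    (mkOrder pi cls).lt a b ↔ (cls a < cls b ∨ (cls a = cls b ∧ pi.lt a b)) := by
  have : (mkOrder pi cls).lt a b ↔
      toLex ((cls a, rnk pi a) : ℕ × ℕ) < toLex ((cls b, rnk pi b) : ℕ × ℕ) := Iff.rfl
  rw [this, Prod.Lex.lt_iff]
  simp only [lt_iff_rnk pi a b, ofLex_toLex]

lemma mkOrder_le (pi : LinearOrder O) (cls : O → ℕ) (a b : O) :
    (mkOrder pi cls).le a b ↔ (cls a < cls b ∨ (cls a = cls b ∧ pi.lt a b) ∨ a = b) := by
  rw [le_iff' (mkOrder pi cls), mkOrder_lt]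
  tauto


/- consequences of group strategy-proofness -/

section GSPfacts

variable {f : (N → LinearOrder O) → N → O}

lemma sp_of_gsp (hgsp : GSP f) :
    ∀ (p p' : N → LinearOrder O) (i : N), (∀ j, j ≠ i → p' j = p j) →
      ¬ sPref (p i) (f p' i) (f p i) := by
  intro p p' i hoff hs
  exact hgsp p p' {i} ⟨i, rfl⟩ (fun j hj => hoff j (by simpa using hj))
    ⟨fun j hj => by rw [Set.mem_singleton_iff] at hj; subst hj; exact Or.inr hs,
     ⟨i, rfl, hs⟩⟩

lemma nb_of_gsp (hgsp : GSP f) : Nonbossy f := by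
  intro p p' i hoff hsame
  by_contra hne
  by_cases hK : ∃ j, sPref (p j) (f p' j) (f p j)
  · obtain ⟨k, hk⟩ := hK
    refine hgsp p p' ({j | sPref (p j) (f p' j) (f p j)} ∪ {i}) ⟨k, Or.inl hk⟩
      (fun j hj => hoff j (fun h => hj (Or.inr h))) ⟨?_, ⟨k, Or.inl hk, hk⟩⟩
    intro j hj
    rcases hj with hj | hj
    · exact Or.inr hj
    · rw [Set.mem_singleton_iff] at hj; subst hj; exact Or.inl hsame
  · push_neg at hK
    have hdiff : ∃ k, f p k ≠ f p' k := by
      by_contra hall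
      push_neg at hall
      exact hne (funext fun j => (hall j).symm)
    obtain ⟨k, hk⟩ := hdiff
    have hki : k ≠ i := fun h => hk (by rw [h]; exact hsame.symm)
    have hks : sPref (p k) (f p k) (f p' k) := by
      rcases lt_tri (p k) (f p' k) (f p k) with h | h | h
      · exact h
      · exact absurd h.symm hk
      · exact absurd h (hK k)
    refine hgsp p' p ({j | f p j ≠ f p' j} ∪ {i}) ⟨k, Or.inl hk⟩
      (fun j hj => (hoff j (fun h => hj (Or.inr h))).symm) ⟨?_, ⟨k, Or.inl hk, ?_⟩⟩
    · intro j hj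
      by_cases hji : j = i
      · subst hji; exact Or.inl hsame.symm
      · rcases hj with hj | hj
        · have : sPref (p j) (f p j) (f p' j) := by
            rcases lt_tri (p j) (f p' j) (f p j) with h | h | h
            · exact h
            · exact absurd h.symm hj
            · exact absurd h (hK j)
          rw [hoff j hji]
          exact Or.inr this
        · exact absurd hj hji
    · rw [hoff k hki]
      exact hks

lemma maskin_of_gsp [Fintype N] (hgsp : GSP f) : MaskinMono f := by
  intro p p' hmono
  have key : ∀ S : Finset N, f (fun j => if j ∈ S then p' j else p j) = f p := by
    intro S
    induction S using Finset.induction_on with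
    | empty => simp
    | @insert i S hiS ih =>
      set r : N → LinearOrder O := fun j => if j ∈ S then p' j else p j with hr
      set r' : N → LinearOrder O := fun j => if j ∈ insert i S then p' j else p j with hr'
      have hoff : ∀ j, j ≠ i → r' j = r j := by
        intro j hj
        simp only [hr, hr', Finset.mem_insert]
        by_cases h : j ∈ S <;> simp [h, hj]
      have hri : r i = p i := by simp [hr, hiS]
      have hr'i : r' i = p' i := by simp [hr']
      have hfri : f r i = f p i := by rw [ih]
      have heq : f r' i = f r i := by
        by_contra hne
        have h1 : ¬ sPref (r i) (f r' i) (f r i) := sp_of_gsp hgsp r r' i hoff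
        have h2 : ¬ sPref (r' i) (f r i) (f r' i) := sp_of_gsp hgsp r' r i
          (fun j hj => (hoff j hj).symm)
        rw [hri, hfri] at h1
        rw [hr'i] at h2
        have hlt : (p i).lt (f r' i) (f p i) := by
          rcases lt_tri (p i) (f r' i) (f p i) with h | h | h
          · exact h
          · exact absurd h (by rw [hfri] at hne; exact hne)
          · exact absurd h h1
        have := hmono i (f r' i) hlt
        rw [← hfri] at this
        exact h2 this
      rw [nb_of_gsp hgsp r r' i hoff heq, ih]
  have := key Finset.univ
  simpa using this

end GSPfacts

/- monotonicity of holdings along a run of the local priority algorithm -/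

lemma run_wPref {C : Set (N → O)} (α : (N → O) → Set N) (p : N → LinearOrder O)
    (x : ℕ → N → O) (m : ℕ)
    (hstep : ∀ t < m, x t ∉ C ∧ lpNoFail α p (x t) ∧ x (t + 1) = lpStep α p (x t)) :
    ∀ s r, s ≤ r → r ≤ m → ∀ j, wPref (p j) (x s j) (x r j) := by
  have main : ∀ k s, s + k ≤ m → ∀ j, wPref (p j) (x s j) (x (s + k) j) := by
    intro k
    induction k with
    | zero => intro s _ j; exact wPref_refl _ _
    | succ k ih =>
      intro s hm j
      have hsk : s + k < m := by omega
      obtain ⟨_, hnf, hs⟩ := hstep (s + k) hsk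
      have step1 : wPref (p j) (x (s + k) j) (x (s + k + 1) j) := by
        rw [hs]
        by_cases hj : j ∈ α (x (s + k))
        · have hne : (LCfin (p j) (x (s + k) j)).Nonempty := hnf j hj
          have : lpStep α p (x (s + k)) j = bestLC (p j) (x (s + k) j) := if_pos hj
          rw [this]
          exact Or.inr (bestLC_lt (p j) hne)
        · have : lpStep α p (x (s + k)) j = x (s + k) j := if_neg hj
          rw [this]
          exact wPref_refl _ _
      have : s + (k + 1) = s + k + 1 := by omega
      rw [this]
      exact wPref_trans (p j) (ih s (by omega) j) step1
  intro s r hsr hrm j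
  have : r = s + (r - s) := by omega
  rw [this]
  exact main (r - s) s (by omega) j

end LPAux

end Helpers

/-- Lemma A.1: let `f` be a group strategy-proof local priority
mechanism and `α` the pointwise union of all implementable local compromiser
assignments inducing `f`.  Then for every allocation `y` and agent `i ∉ α(y)` there is
a profile in `P^y` at which `i` receives `y i`. -/
theorem nonCompromiser_sometimes_top
    {N O : Type} [Fintype N] [Fintype O] [Nonempty O]
    (C : Set (N → O)) (hC : C.Nonempty)
    (f : (N → LinearOrder O) → N → O) (hf : ∀ p, f p ∈ C)
    (hgsp : GSP f) (hlpm : ∃ α, lpInduces C α f) :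
    ∀ (y : N → O) (i : N), i ∉ alphaUnionAll C f y →
      ∃ p : N → LinearOrder O, tau1 p = y ∧ f p i = y i := by
  classical
  intro y i hi
  obtain ⟨α, hα⟩ := hlpm
  -- a base linear order on O and "push-to-top" profiles
  have base : LinearOrder O := LinearOrder.lift' (Fintype.equivFin O) (Fintype.equivFin O).injective
  have top_push : ∀ (pp : LinearOrder O) (cl : O → ℕ) (a : O), (∀ b, b ≠ a → cl b < cl a) →
      topObj (LPAux.mkOrder pp cl) = a := by
    intro pp cl a hcl
    apply LPAux.topObj_eq
    intro b
    rw [LPAux.mkOrder_le]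
    by_cases hb : b = a
    · subst hb; right; right; rfl
    · left; exact hcl b hb
  by_cases hyC : y ∈ C
  · -- easy case : y is feasible
    set p : N → LinearOrder O := fun j => LPAux.mkOrder base (fun b => if b = y j then 1 else 0)
      with hp
    have hptop : tau1 p = y := by
      funext j
      simp only [tau1, hp]
      exact top_push base _ (y j) (fun b hb => by simp [hb])
    obtain ⟨m, x, hx0, hsteps, hxm, _⟩ := hα.2 p
    have hfp : f p = y := by
      rcases Nat.eq_zero_or_pos m with hm | hm
      · rw [← hxm, hm, hx0, hptop]
      · exact absurd (by rw [hx0, hptop]; exact hyC) (hsteps 0 hm).1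
    exact ⟨p, hptop, by rw [hfp]⟩
  · -- main case : y is infeasible
    set F : Set N := {j | ∀ q, tau1 q = y → f q j ≠ y j} with hFdef
    -- every local compromiser at y (of any inducing LCA) is a fixed compromiser
    have hαsubF : α y ⊆ F := by
      intro j hj q hqtop
      obtain ⟨m, x, hx0, hsteps, hxm, _⟩ := hα.2 q
      have hx0y : x 0 = y := by rw [hx0, hqtop]
      have hm : 0 < m := by
        rcases Nat.eq_zero_or_pos m with hm | hm
        · exfalso; apply hyC; rw [← hx0y, ← hm]; rw [hxm]; exact hf q
        · exact hm
      obtain ⟨_, hnf, hstep⟩ := hsteps 0 hm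
      have hjx : j ∈ α (x 0) := by rw [hx0y]; exact hj
      have hne : (LCfin (q j) (x 0 j)).Nonempty := hnf j hjx
      have hx1 : x 1 j = bestLC (q j) (x 0 j) := by rw [hstep]; exact if_pos hjx
      have hlt1 : (q j).lt (x 1 j) (y j) := by
        rw [hx1, ← hx0y]; · exact LPAux.bestLC_lt (q j) hne
      have hmono := LPAux.run_wPref α q x m hsteps 1 m hm le_rfl j
      have : (q j).lt (x m j) (y j) := by
        rcases hmono with heq | hlt
        · rw [← heq]; exact hlt1
        · exact LPAux.lt_trans' (q j) hlt hlt1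
      rw [hxm] at this
      exact (LPAux.ne_of_lt' (q j) this)
    -- the enlarged local compromiser assignment
    set β : (N → O) → Set N := fun z => if z = y then F else α z with hβdef
    have hβy : β y = F := if_pos rfl
    have hβne : ∀ z, z ≠ y → β z = α z := fun z hz => if_neg hz
    have hind : lpInduces C β f := by
      constructor
      · -- IsLCA
        intro z
        constructor
        · intro hzC
          by_cases hz : z = y
          · subst hz
            rw [hβy]
            obtain ⟨j, hj⟩ := (hα.1 z).1 hzC
            exact ⟨j, hαsubF hj⟩
          · rw [hβne z hz]; exact (hα.1 z).1 hzC
        · intro hzC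
          have hz : z ≠ y := by rintro rfl; exact hyC hzC
          rw [hβne z hz]; exact (hα.1 z).2 hzC
      · intro p
        obtain ⟨m, x, hx0, hsteps, hxm, _⟩ := hα.2 p
        by_cases hvisit : ∃ s, s ≤ m ∧ x s = y
        · -- the α-run visits y
          set ν : N → O := f p with hνdef
          have hdec : DecidablePred (fun s => s ≤ m ∧ x s = y) := fun _ => Classical.dec _
          set t : ℕ := @Nat.find _ hdec hvisit with htdef
          have htspec := @Nat.find_spec _ hdec hvisit
          have htm : t ≤ m := htspec.1
          have hxty : x t = y := htspec.2
          have htmin : ∀ s, s < t → x s ≠ y := by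
            intro s hs hxs
            exact @Nat.find_min _ hdec hvisit s hs ⟨le_of_lt (lt_of_lt_of_le hs htm), hxs⟩
          have htltm : t < m := by
            rcases Nat.lt_or_ge t m with h | h
            · exact h
            · exfalso
              have : t = m := le_antisymm htm h
              apply hyC; rw [← hxty, this, hxm]; exact hf p
          have hνy : ∀ j, wPref (p j) (y j) (ν j) := by
            intro j
            have := LPAux.run_wPref α p x m hsteps t m htm le_rfl j
            rw [hxty, hxm] at this
            exact this
          -- push y to the top : the profile q
          set q : N → LinearOrder O :=
            fun j => LPAux.mkOrder (p j) (fun b => if b = y j then 1 else 0) with hqdef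
          have hqtop : tau1 q = y := by
            funext j
            simp only [tau1, hqdef]
            exact top_push (p j) _ (y j) (fun b hb => by simp [hb])
          have hMq : f q = f p := by
            apply LPAux.maskin_of_gsp hgsp
            intro j b hb
            rw [← hνdef] at hb ⊢
            have hby : (p j).lt b (y j) := by
              rcases hνy j with heq | hlt
              · rw [heq]; exact hb
              · exact LPAux.lt_trans' (p j) hb hlt
            have hbney : b ≠ y j := LPAux.ne_of_lt' (p j) hby
            rw [LPAux.mkOrder_lt]
            by_cases hνj : ν j = y j
            · left; simp [hbney, hνj]
            · right
              constructor
              · simp [hbney, hνj]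
              · exact hb
          have hFne : ∀ j ∈ F, ν j ≠ y j := by
            intro j hj
            have := hj q hqtop
            rw [hMq] at this
            exact this
          have hFlt : ∀ j ∈ F, (p j).lt (ν j) (y j) := by
            intro j hj
            exact LPAux.lt_of_wPref_ne (p j) (hνy j) (Ne.symm (hFne j hj))
          -- the surgery profile q'
          set cls : N → O → ℕ := fun j b =>
            if b = y j then (if j ∈ F then 0 else 3)
            else if (p j).lt b (y j) then 2 else 1 with hclsdef
          have hcls_le3 : ∀ j b, cls j b ≤ 3 := by
            intro j b
            simp only [hclsdef]
            split_ifs <;> omega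
          have hcls_mid : ∀ j b, (p j).lt b (y j) → cls j b = 2 := by
            intro j b hb
            have : b ≠ y j := LPAux.ne_of_lt' (p j) hb
            simp [hclsdef, this, hb]
          have hcls_of2 : ∀ j b, cls j b = 2 → (p j).lt b (y j) := by
            intro j b hb
            simp only [hclsdef] at hb
            by_cases h1 : b = y j
            · rw [if_pos h1] at hb
              by_cases h2 : j ∈ F
              · rw [if_pos h2] at hb; omega
              · rw [if_neg h2] at hb; omega
            · rw [if_neg h1] at hb
              by_cases h2 : (p j).lt b (y j)
              · exact h2
              · rw [if_neg h2] at hb; omega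
          have hcls_of3 : ∀ j b, cls j b = 3 → b = y j ∧ j ∉ F := by
            intro j b hb
            simp only [hclsdef] at hb
            by_cases h1 : b = y j
            · refine ⟨h1, ?_⟩
              rw [if_pos h1] at hb
              by_cases h2 : j ∈ F
              · rw [if_pos h2] at hb; omega
              · exact h2
            · rw [if_neg h1] at hb
              by_cases h2 : (p j).lt b (y j)
              · rw [if_pos h2] at hb; omega
              · rw [if_neg h2] at hb; omega
          have hclsF_y : ∀ j ∈ F, cls j (y j) = 0 := by
            intro j hj; simp [hclsdef, hj]
          have hclsnF_y : ∀ j, j ∉ F → cls j (y j) = 3 := by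
            intro j hj; simp [hclsdef, hj]
          set q' : N → LinearOrder O := fun j => LPAux.mkOrder (p j) (cls j) with hq'def
          have hq'lt : ∀ j a b, (q' j).lt a b ↔
              (cls j a < cls j b ∨ (cls j a = cls j b ∧ (p j).lt a b)) := by
            intro j a b
            exact LPAux.mkOrder_lt (p j) (cls j) a b
          have hq'le : ∀ j a b, (q' j).le a b ↔
              (cls j a < cls j b ∨ (cls j a = cls j b ∧ (p j).lt a b) ∨ a = b) := by
            intro j a b
            exact LPAux.mkOrder_le (p j) (cls j) a b
          set c : N → O := fun j => bestLC (p j) (y j) with hcdef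
          have hclt : ∀ j ∈ F, (p j).lt (c j) (y j) := by
            intro j hj
            exact LPAux.bestLC_lt (p j) ⟨ν j, (LPAux.mem_LCfin (p j) _ _).2 (hFlt j hj)⟩
          have hcub : ∀ j b, (p j).lt b (y j) → (p j).le b (c j) := by
            intro j b hb
            exact LPAux.bestLC_ub (p j) hb
          -- the top of q'
          have hz0 : tau1 q' = fun j => if j ∈ F then c j else y j := by
            funext j
            by_cases hjF : j ∈ F
            · rw [if_pos hjF]
              apply LPAux.topObj_eq
              intro b
              rw [hq'le]
              have hcy : (p j).lt (c j) (y j) := hclt j hjF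
              have hc2 : cls j (c j) = 2 := hcls_mid j _ hcy
              by_cases hb1 : b = y j
              · left; rw [hb1, hclsF_y j hjF, hc2]; omega
              · by_cases hb2 : (p j).lt b (y j)
                · by_cases hb3 : b = c j
                  · right; right; exact hb3
                  · right; left
                    refine ⟨by rw [hcls_mid j b hb2, hc2], ?_⟩
                    rcases (LPAux.le_iff' (p j) b (c j)).1 (hcub j b hb2) with h | h
                    · exact h
                    · exact absurd h hb3
                · left
                  have : cls j b = 1 := by simp [hclsdef, hb1, hb2]
                  rw [this, hc2]; omega
            · rw [if_neg hjF]
              apply LPAux.topObj_eq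
              intro b
              rw [hq'le]
              by_cases hb1 : b = y j
              · right; right; exact hb1
              · left
                rw [hclsnF_y j hjF]
                have : cls j b ≤ 2 := by
                  simp only [hclsdef, if_neg hb1]; split_ifs <;> omega
                omega
          -- q' gives the same outcome (Maskin monotonicity)
          have hMq' : f q' = f p := by
            apply LPAux.maskin_of_gsp hgsp
            intro j b hb
            rw [← hνdef] at hb ⊢
            have hby : (p j).lt b (y j) := by
              rcases hνy j with heq | hlt
              · rw [heq]; exact hb
              · exact LPAux.lt_trans' (p j) hb hlt
            have hb2 : cls j b = 2 := hcls_mid j b hby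
            rw [hq'lt]
            by_cases hνj : ν j = y j
            · have hjF : j ∉ F := fun h => hFne j h hνj
              left
              rw [hb2, show cls j (ν j) = 3 by rw [hνj]; exact hclsnF_y j hjF]
              omega
            · have hνlt : (p j).lt (ν j) (y j) :=
                LPAux.lt_of_wPref_ne (p j) (hνy j) (Ne.symm hνj)
              right
              exact ⟨by rw [hb2, hcls_mid j _ hνlt], hb⟩
          -- the run at q'
          obtain ⟨m', w, hw0, hwsteps, hwm', _⟩ := hα.2 q'
          have hwm : w m' = ν := by rw [hνdef, hwm']; exact hMq'
          have hwmono := LPAux.run_wPref α q' w m' hwsteps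
          -- the invariant
          have INV : ∀ r, r ≤ m' → ∀ j,
              (w r j = y j ∧ j ∉ F) ∨ (p j).lt (w r j) (y j) := by
            intro r hr j
            have h2 : wPref (q' j) (w r j) (ν j) := by
              have := hwmono r m' hr le_rfl j
              rw [hwm] at this
              exact this
            by_cases hjF : j ∈ F
            · right
              rcases h2 with heq | hlt
              · rw [heq]; exact hFlt j hjF
              · rw [hq'lt] at hlt
                have hν2 : cls j (ν j) = 2 := hcls_mid j _ (hFlt j hjF)
                rcases hlt with hlt | ⟨hceq, _⟩
                · rw [hν2] at hlt
                  have h3 : cls j (w r j) = 3 := by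
                    have := hcls_le3 j (w r j); omega
                  exact absurd (hcls_of3 j _ h3).2 (fun h => h hjF)
                · exact hcls_of2 j _ (by rw [← hceq, hν2])
            · by_cases hνj : ν j = y j
              · rcases h2 with heq | hlt
                · left; exact ⟨heq.trans hνj, hjF⟩
                · exfalso
                  rw [hq'lt] at hlt
                  have hν3 : cls j (ν j) = 3 := by rw [hνj]; exact hclsnF_y j hjF
                  rcases hlt with hlt | ⟨hceq, hplt⟩
                  · rw [hν3] at hlt
                    have := hcls_le3 j (w r j); omega
                  · have := hcls_of3 j (w r j) (by rw [← hceq, hν3])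
                    rw [this.1, hνj] at hplt
                    exact LPAux.lt_irrefl' (p j) _ hplt
              · have hνlt : (p j).lt (ν j) (y j) :=
                  LPAux.lt_of_wPref_ne (p j) (hνy j) (Ne.symm hνj)
                rcases h2 with heq | hlt
                · right; rw [heq]; exact hνlt
                · rw [hq'lt] at hlt
                  have hν2 : cls j (ν j) = 2 := hcls_mid j _ hνlt
                  rcases hlt with hlt | ⟨hceq, _⟩
                  · rw [hν2] at hlt
                    have h3 : cls j (w r j) = 3 := by
                      have := hcls_le3 j (w r j); omega
                    left; exact ⟨(hcls_of3 j _ h3).1, (hcls_of3 j _ h3).2⟩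
                  · right; exact hcls_of2 j _ (by rw [← hceq, hν2])
          -- next holdings agree under p and q'
          have stepagree : ∀ r, r < m' → ∀ j ∈ α (w r),
              bestLC (p j) (w r j) = bestLC (q' j) (w r j) ∧
              (LCfin (p j) (w r j)).Nonempty := by
            intro r hr j hj
            obtain ⟨hwC, hwnf, hwstep⟩ := hwsteps r hr
            have hne' : (LCfin (q' j) (w r j)).Nonempty := hwnf j hj
            set b : O := bestLC (q' j) (w r j) with hbdef
            have hbltq : (q' j).lt b (w r j) := LPAux.bestLC_lt (q' j) hne'
            have hb1 : w (r + 1) j = b := by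
              rw [hwstep]
              simp only [lpStep]
              rw [if_pos hj]
            have hinvb := INV (r + 1) (by omega) j
            rw [hb1] at hinvb
            rcases hinvb with ⟨hby, hjF⟩ | hbmid
            · exfalso
              rcases INV r (by omega) j with ⟨ha, _⟩ | ha
              · rw [hby, ha] at hbltq
                exact LPAux.lt_irrefl' (q' j) _ hbltq
              · rw [hq'lt] at hbltq
                have h3 : cls j b = 3 := by rw [hby]; exact hclsnF_y j hjF
                have h2 : cls j (w r j) = 2 := hcls_mid j _ ha
                rw [h3, h2] at hbltq
                rcases hbltq with h | ⟨h, _⟩ <;> omega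
            · have hba : (p j).lt b (w r j) := by
                rcases INV r (by omega) j with ⟨ha, hjF⟩ | ha
                · rw [ha]; exact hbmid
                · rw [hq'lt] at hbltq
                  have h2 : cls j b = 2 := hcls_mid j _ hbmid
                  have h2' : cls j (w r j) = 2 := hcls_mid j _ ha
                  rcases hbltq with h | ⟨_, h⟩
                  · rw [h2, h2'] at h; omega
                  · exact h
              refine ⟨?_, ⟨b, (LPAux.mem_LCfin (p j) _ _).2 hba⟩⟩
              apply LPAux.bestLC_eq (p j) hba
              intro b' hb'
              have hb'mid : (p j).lt b' (y j) := by
                rcases INV r (by omega) j with ⟨ha, _⟩ | ha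
                · rw [ha] at hb'; exact hb'
                · exact LPAux.lt_trans' (p j) hb' ha
              have hb'q : (q' j).lt b' (w r j) := by
                rw [hq'lt]
                rcases INV r (by omega) j with ⟨ha, hjF⟩ | ha
                · left
                  rw [hcls_mid j _ hb'mid, ha, hclsnF_y j hjF]
                  omega
                · right
                  exact ⟨by rw [hcls_mid j _ hb'mid, hcls_mid j _ ha], hb'⟩
              have hble : (q' j).le b' b := LPAux.bestLC_ub (q' j) hb'q
              rcases (LPAux.le_iff' (q' j) b' b).1 hble with hlt | heq
              · rw [hq'lt] at hlt
                rcases hlt with h | ⟨_, h⟩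
                · rw [hcls_mid j _ hb'mid, hcls_mid j _ hbmid] at h; omega
                · exact LPAux.le_of_lt' (p j) h
              · exact (LPAux.le_iff' (p j) b' b).2 (Or.inr heq)
          -- F is nonempty, so the run at q' never sits at y
          have hFnonempty : F.Nonempty := by
            obtain ⟨j0, hj0⟩ := (hα.1 y).1 hyC
            exact ⟨j0, hαsubF hj0⟩
          have hwney : ∀ r, r ≤ m' → w r ≠ y := by
            intro r hr heq
            obtain ⟨j0, hj0⟩ := hFnonempty
            rcases INV r hr j0 with ⟨_, hj0'⟩ | hlt
            · exact hj0' hj0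
            · rw [heq] at hlt
              exact LPAux.lt_irrefl' (p j0) _ hlt
          -- assemble the run of the enlarged assignment
          set X : ℕ → N → O := fun s => if s ≤ t then x s else w (s - (t + 1)) with hXdef
          have hXlow : ∀ s, s ≤ t → X s = x s := fun s hs => if_pos hs
          have hXhigh : ∀ s, t < s → X s = w (s - (t + 1)) := fun s hs => if_neg (by omega)
          refine ⟨t + 1 + m', X, ?_, ?_, ?_, hf p⟩
          · rw [hXlow 0 (Nat.zero_le t)]; exact hx0
          · intro s hs
            rcases Nat.lt_trichotomy s t with hst | hst | hst
            · -- s < t : prefix of the old run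
              have hsm : s < m := by omega
              obtain ⟨h1, h2, h3⟩ := hsteps s hsm
              have hxsy : x s ≠ y := htmin s hst
              rw [hXlow s (le_of_lt hst), hXlow (s + 1) (by omega)]
              refine ⟨h1, ?_, ?_⟩
              · intro j hj; rw [hβne _ hxsy] at hj; exact h2 j hj
              · rw [h3]; funext k; simp only [lpStep, hβne _ hxsy]
            · -- s = t : all fixed compromisers move at once
              rw [hst, hXlow t le_rfl, hXhigh (t + 1) (by omega),
                (by omega : t + 1 - (t + 1) = 0), hxty]
              refine ⟨hyC, ?_, ?_⟩
              · intro j hj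
                rw [hβy] at hj
                exact ⟨ν j, (LPAux.mem_LCfin (p j) _ _).2 (hFlt j hj)⟩
              · rw [hw0, hz0]
                funext k
                simp only [lpStep, hβy, hcdef]
            · -- s > t : the run at q'
              have hrm : s - (t + 1) < m' := by omega
              obtain ⟨hwC, hwnf, hwstep⟩ := hwsteps (s - (t + 1)) hrm
              rw [hXhigh s hst, hXhigh (s + 1) (by omega),
                (by omega : s + 1 - (t + 1) = (s - (t + 1)) + 1)]
              have hwr : w (s - (t + 1)) ≠ y := hwney _ (by omega)
              refine ⟨hwC, ?_, ?_⟩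
              · intro j hj
                rw [hβne _ hwr] at hj
                exact (stepagree _ hrm j hj).2
              · rw [hwstep]
                funext k
                simp only [lpStep, hβne _ hwr]
                by_cases hk : k ∈ α (w (s - (t + 1)))
                · simp only [if_pos hk]
                  exact ((stepagree _ hrm k hk).1).symm
                · simp only [if_neg hk]
          · rw [hXhigh (t + 1 + m') (by omega), (by omega : t + 1 + m' - (t + 1) = m'),
              hwm, hνdef]
        · -- the α-run never visits y : reuse the same run
          refine ⟨m, x, hx0, ?_, hxm, hf p⟩
          intro s hs
          obtain ⟨h1, h2, h3⟩ := hsteps s hs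
          have hxsy : x s ≠ y := fun h => hvisit ⟨s, le_of_lt hs, h⟩
          refine ⟨h1, ?_, ?_⟩
          · intro j hj
            rw [hβne _ hxsy] at hj
            exact h2 j hj
          · rw [h3]
            funext k
            simp only [lpStep, hβne _ hxsy]
    have hiF : i ∉ F := fun hmem => hi ⟨β, hind, by rw [hβy]; exact hmem⟩
    rw [hFdef] at hiF
    simp only [Set.mem_setOf_eq, not_forall] at hiF
    obtain ⟨q, hqtop, hqval⟩ := hiF
    rw [not_ne_iff] at hqval
    exact ⟨q, hqtop, hqval⟩
end
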